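/- arXiv:1912.09480 — 13 statements merged into one kernel-verified Lean document; each statement's English description precedes it below -/
import Mathlib

section
/- If ⊢ is a regular entailment relation on a preordered commutative group G, then for all a, x in G: {a + x, a - x} ⊢ {a} and {a} ⊢ {a + x, a - x}. -/
open Finset Pointwise

/-- A regular entailment relation on a preordered commutative group `G`:
a relation between nonempty finite subsets of `G` satisfying weakening, cut,
`{a} ⊢ {b}` when `a ≤ b`, translation invariance, and regularity. -/
structure IsRegularEntailment {G : Type*} [AddCommGroup G] [Preorder G]
    [CovariantClass G G (· + ·) (· ≤ ·)] [DecidableEq G]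
    (r : Finset G → Finset G → Prop) : Prop where
  weaken : ∀ {A A' B B' : Finset G}, A'.Nonempty → B'.Nonempty →
    A' ⊆ A → B' ⊆ B → r A' B' → r A B
  cut : ∀ {A B : Finset G} (x : G), A.Nonempty → B.Nonempty →
    r (insert x A) B → r A (insert x B) → r A B
  of_le : ∀ {a b : G}, a ≤ b → r {a} {b}
  translate : ∀ {A B : Finset G} (x : G),
    r (A.image (· + x)) (B.image (· + x)) → r A B
  regular : ∀ a b x y : G, r {a + x, b + y} {a + b, x + y}

theorem regular_entailment_split {G : Type*} [AddCommGroup G] [Preorder G]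
    [CovariantClass G G (· + ·) (· ≤ ·)] [DecidableEq G]
    (r : Finset G → Finset G → Prop) (hr : IsRegularEntailment r)
    (a x : G) : r {a + x, a - x} {a} ∧ r {a} {a + x, a - x} := by
  constructor
  · have h := hr.regular 0 a (a + x) (-x)
    simpa [sub_eq_add_neg, add_assoc] using h
  · have h := hr.regular 0 (a + x) a (-x)
    simpa [sub_eq_add_neg, add_assoc] using h
end

section
/- Let ⊢ be a regular entailment relation on a preordered commutative group G. If A ∪ (A + x) ⊢ B and A ∪ (A - x) ⊢ B, then A ⊢ B. Symmetrically, if A ⊢ B ∪ (B + x) and A ⊢ B ∪ (B - x), then A ⊢ B. -/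
open Finset Pointwise

section Aux

variable {G : Type*} [AddCommGroup G] [Preorder G]
    [CovariantClass G G (· + ·) (· ≤ ·)] [DecidableEq G]
    {r : Finset G → Finset G → Prop}

/-- Multicut on the left: cut away a whole finite set from the left. -/
lemma IsRegularEntailment.multicut_left (hr : IsRegularEntailment r) (C : Finset G) :
    ∀ {A B : Finset G}, A.Nonempty → B.Nonempty →
      r (A ∪ C) B → (∀ c ∈ C, r A (insert c B)) → r A B := by
  induction C using Finset.induction_on with
  | empty => intro A B hA hB h _; simpa using h
  | @insert c C' hc ih =>
    intro A B hA hB h hmem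
    refine ih hA hB ?_ (fun d hd => hmem d (Finset.mem_insert_of_mem hd))
    have h' : r (insert c (A ∪ C')) B := by
      rwa [Finset.union_insert] at h
    exact hr.cut c (hA.mono Finset.subset_union_left) hB h'
      (hr.weaken hA (Finset.insert_nonempty _ _) Finset.subset_union_left
        (Finset.Subset.refl _) (hmem c (Finset.mem_insert_self _ _)))

/-- Multicut on the right: cut away a whole finite set from the right. -/
lemma IsRegularEntailment.multicut_right (hr : IsRegularEntailment r) (C : Finset G) :
    ∀ {A B : Finset G}, A.Nonempty → B.Nonempty →
      r A (B ∪ C) → (∀ c ∈ C, r (insert c A) B) → r A B := by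
  induction C using Finset.induction_on with
  | empty => intro A B hA hB h _; simpa using h
  | @insert c C' hc ih =>
    intro A B hA hB h hmem
    refine ih hA hB ?_ (fun d hd => hmem d (Finset.mem_insert_of_mem hd))
    have h' : r A (insert c (B ∪ C')) := by
      rwa [Finset.union_insert] at h
    exact hr.cut c hA (hB.mono Finset.subset_union_left)
      (hr.weaken (Finset.insert_nonempty _ _) hB (Finset.Subset.refl _)
        Finset.subset_union_left (hmem c (Finset.mem_insert_self _ _))) h'

lemma IsRegularEntailment.key_left (hr : IsRegularEntailment r) (a a' x : G) :
    r ({a', a} : Finset G) ({a' - x, a + x} : Finset G) := by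
  have h := hr.regular (a' - x) 0 x a
  have e1 : a' - x + x = a' := by abel
  have e2 : (0 : G) + a = a := by abel
  have e3 : a' - x + 0 = a' - x := by abel
  have e4 : x + a = a + x := by abel
  rwa [e1, e2, e3, e4] at h

lemma IsRegularEntailment.key_right (hr : IsRegularEntailment r) (b b' x : G) :
    r ({b + x, b' - x} : Finset G) ({b, b'} : Finset G) := by
  have h := hr.regular b 0 x (b' - x)
  have e1 : (0 : G) + (b' - x) = b' - x := by abel
  have e2 : b + 0 = b := by abel
  have e3 : x + (b' - x) = b' := by abel
  rwa [e1, e2, e3] at h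

end Aux

theorem regular_entailment_case_split {G : Type*} [AddCommGroup G] [Preorder G]
    [CovariantClass G G (· + ·) (· ≤ ·)] [DecidableEq G]
    (r : Finset G → Finset G → Prop) (hr : IsRegularEntailment r)
    (A B : Finset G) (hA : A.Nonempty) (hB : B.Nonempty) (x : G) :
    (r (A ∪ A.image (· + x)) B → r (A ∪ A.image (· - x)) B → r A B) ∧
    (r A (B ∪ B.image (· + x)) → r A (B ∪ B.image (· - x)) → r A B) := by
  constructor
  · intro h1 h2
    refine hr.multicut_left (A.image (· + x)) hA hB h1 ?_
    intro c hc
    obtain ⟨a, ha, rfl⟩ := Finset.mem_image.mp hc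
    refine hr.multicut_left (A.image (· - x)) hA (Finset.insert_nonempty _ _) ?_ ?_
    · exact hr.weaken hA.inl hB (Finset.Subset.refl _)
        (Finset.subset_insert _ _) h2
    · intro d hd
      obtain ⟨a', ha', rfl⟩ := Finset.mem_image.mp hd
      refine hr.weaken (Finset.insert_nonempty _ _) (Finset.insert_nonempty _ _)
        ?_ ?_ (hr.key_left a a' x)
      · intro z hz
        rcases Finset.mem_insert.mp hz with h | h
        · exact h ▸ ha'
        · exact (Finset.mem_singleton.mp h) ▸ ha
      · intro z hz
        rcases Finset.mem_insert.mp hz with h | h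
        · exact h ▸ Finset.mem_insert_self _ _
        · exact (Finset.mem_singleton.mp h) ▸
            Finset.mem_insert_of_mem (Finset.mem_insert_self _ _)
  · intro h1 h2
    refine hr.multicut_right (B.image (· + x)) hA hB h1 ?_
    intro c hc
    obtain ⟨b, hb, rfl⟩ := Finset.mem_image.mp hc
    refine hr.multicut_right (B.image (· - x)) (Finset.insert_nonempty _ _) hB ?_ ?_
    · exact hr.weaken hA hB.inl (Finset.subset_insert _ _) (Finset.Subset.refl _) h2
    · intro d hd
      obtain ⟨b', hb', rfl⟩ := Finset.mem_image.mp hd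
      refine hr.weaken (Finset.insert_nonempty _ _) (Finset.insert_nonempty _ _)
        ?_ ?_ (hr.key_right b b' x)
      · intro z hz
        rcases Finset.mem_insert.mp hz with h | h
        · exact h ▸ Finset.mem_insert_of_mem (Finset.mem_insert_self _ _)
        · exact (Finset.mem_singleton.mp h) ▸ Finset.mem_insert_self _ _
      · intro z hz
        rcases Finset.mem_insert.mp hz with h | h
        · exact h ▸ hb
        · exact (Finset.mem_singleton.mp h) ▸ hb'
end

section
/- Let ⊢ be a regular entailment relation on a preordered commutative group G. Then A ∪ (A + x) ⊢ B if and only if A ⊢ B ∪ (B - x). -/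
open Finset Pointwise

section Aux

variable {G : Type*} [AddCommGroup G] [Preorder G]
    [CovariantClass G G (· + ·) (· ≤ ·)] [DecidableEq G]
    {r : Finset G → Finset G → Prop}

/-- Regularity reformulated: `{s,t} ⊢ {u,v}` whenever `s + t = u + v`. -/
lemma IsRegularEntailment.reg' (hr : IsRegularEntailment r) {u v s t : G}
    (h : s + t = u + v) : r {s, t} {u, v} := by
  have h2 := hr.regular 0 u s (t - u)
  have e1 : u + (t - u) = t := by abel
  have e2 : s + (t - u) = v := by
    have e : s + (t - u) = s + t - u := by abel
    rw [e, h]; abel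
  simp only [zero_add, e1, e2] at h2
  exact h2

/-- Derived rule: replace `u`, `v` by `s`, `t` (with `s + t = u + v`) on the left. -/
lemma IsRegularEntailment.cutL (hr : IsRegularEntailment r) {C D : Finset G} {u v s t : G}
    (h : s + t = u + v) (hs : s ∈ C) (ht : t ∈ C) (hD : D.Nonempty)
    (h1 : r (insert u C) D) (h2 : r (insert v C) D) : r C D := by
  have hC : C.Nonempty := ⟨s, hs⟩
  have hst : ({s, t} : Finset G) ⊆ C := by
    intro z hz; simp only [mem_insert, mem_singleton] at hz
    rcases hz with h | h <;> subst h <;> assumption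
  have huv : ({u, v} : Finset G) ⊆ insert u (insert v D) := by
    intro z hz; simp only [mem_insert, mem_singleton] at hz
    rcases hz with h | h <;> simp [h]
  have h0 : r C (insert u (insert v D)) :=
    hr.weaken ⟨s, by simp⟩ ⟨u, by simp⟩ hst huv (hr.reg' h)
  have h1' : r (insert u C) (insert v D) :=
    hr.weaken (insert_nonempty _ _) hD (Finset.Subset.refl _) (subset_insert _ _) h1
  have h3 : r C (insert v D) := hr.cut u hC (insert_nonempty _ _) h1' h0
  exact hr.cut v hC hD h2 h3

/-- Derived rule: replace `u`, `v` by `s`, `t` (with `s + t = u + v`) on the right. -/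
lemma IsRegularEntailment.cutR (hr : IsRegularEntailment r) {C D : Finset G} {u v s t : G}
    (h : s + t = u + v) (hs : s ∈ D) (ht : t ∈ D) (hC : C.Nonempty)
    (h1 : r C (insert u D)) (h2 : r C (insert v D)) : r C D := by
  have hD : D.Nonempty := ⟨s, hs⟩
  have hst : ({s, t} : Finset G) ⊆ D := by
    intro z hz; simp only [mem_insert, mem_singleton] at hz
    rcases hz with h | h <;> subst h <;> assumption
  have huv : ({u, v} : Finset G) ⊆ insert v (insert u C) := by
    intro z hz; simp only [mem_insert, mem_singleton] at hz
    rcases hz with h | h <;> simp [h]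
  have h0 : r (insert v (insert u C)) D :=
    hr.weaken ⟨u, by simp⟩ ⟨s, by simp⟩ huv hst (hr.reg' h.symm)
  have h2' : r (insert u C) (insert v D) :=
    hr.weaken hC (insert_nonempty _ _) (subset_insert _ _) (Finset.Subset.refl _) h2
  have h3 : r (insert u C) D := hr.cut v (insert_nonempty _ _) hD h0 h2'
  exact hr.cut u hC hD h3 h1

/-- Grid induction: a predicate on pairs of subsets of `A` which holds when either
component equals `A`, and propagates down from `(insert a U, V)` and `(U, insert b V)`
to `(U, V)`, holds at `(∅, ∅)`. -/
lemma grid_induction {α : Type*} [DecidableEq α] (A : Finset α)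
    (P : Finset α → Finset α → Prop)
    (base1 : ∀ V, V ⊆ A → P A V) (base2 : ∀ U, U ⊆ A → P U A)
    (step : ∀ U V, U ⊆ A → V ⊆ A →
      ∀ a ∈ A, a ∉ U → ∀ b ∈ A, b ∉ V →
      P (insert a U) V → P U (insert b V) → P U V) :
    P ∅ ∅ := by
  suffices h : ∀ n U V, U ⊆ A → V ⊆ A → (A \ U).card + (A \ V).card ≤ n → P U V from
    h ((A \ ∅).card + (A \ ∅).card) ∅ ∅ (empty_subset _) (empty_subset _) le_rfl
  intro n
  induction n with
  | zero =>
    intro U V hU hV hc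
    have hU' : A \ U = ∅ := card_eq_zero.mp (Nat.le_zero.mp
      (le_trans (Nat.le_add_right _ _) hc))
    have hUA : U = A := Finset.Subset.antisymm hU (sdiff_eq_empty_iff_subset.mp hU')
    rw [hUA]; exact base1 V hV
  | succ n ih =>
    intro U V hU hV hc
    by_cases hUA : U = A
    · rw [hUA]; exact base1 V hV
    by_cases hVA : V = A
    · rw [hVA]; exact base2 U hU
    obtain ⟨a, ha⟩ : (A \ U).Nonempty := by
      rw [sdiff_nonempty]; intro h; exact hUA (Finset.Subset.antisymm hU h)
    obtain ⟨b, hb⟩ : (A \ V).Nonempty := by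
      rw [sdiff_nonempty]; intro h; exact hVA (Finset.Subset.antisymm hV h)
    obtain ⟨haA, haU⟩ := mem_sdiff.mp ha
    obtain ⟨hbA, hbV⟩ := mem_sdiff.mp hb
    have cardU : (A \ insert a U).card + 1 = (A \ U).card := by
      rw [Finset.sdiff_insert, Finset.card_erase_of_mem ha]
      have : 0 < (A \ U).card := Finset.card_pos.mpr ⟨a, ha⟩
      omega
    have cardV : (A \ insert b V).card + 1 = (A \ V).card := by
      rw [Finset.sdiff_insert, Finset.card_erase_of_mem hb]
      have : 0 < (A \ V).card := Finset.card_pos.mpr ⟨b, hb⟩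
      omega
    refine step U V hU hV a haA haU b hbA hbV ?_ ?_
    · exact ih (insert a U) V (insert_subset haA hU) hV (by omega)
    · exact ih U (insert b V) hU (insert_subset hbA hV) (by omega)

end Aux

theorem regular_entailment_shift_iff {G : Type*} [AddCommGroup G] [Preorder G]
    [CovariantClass G G (· + ·) (· ≤ ·)] [DecidableEq G]
    (r : Finset G → Finset G → Prop) (hr : IsRegularEntailment r)
    (A B : Finset G) (hA : A.Nonempty) (hB : B.Nonempty) (x : G) :
    r (A ∪ A.image (· + x)) B ↔ r A (B ∪ B.image (· - x)) := by
  constructor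
  · intro H
    set D : Finset G := B ∪ B.image (· - x) with hDdef
    have hD : D.Nonempty := ⟨hB.choose, mem_union_left _ hB.choose_spec⟩
    -- translated hypothesis : A ∪ (A - x) ⊢ B - x
    have htrans : r (A ∪ A.image (· - x)) (B.image (· - x)) := by
      apply hr.translate x
      have e1 : (A ∪ A.image (· - x)).image (· + x) = A ∪ A.image (· + x) := by
        rw [image_union, image_image]
        have : ((· + x) ∘ (· - x) : G → G) = id := by funext z; simp
        rw [this, image_id, union_comm]
      have e2 : (B.image (· - x)).image (· + x) = B := by
        rw [image_image]
        have : ((· + x) ∘ (· - x) : G → G) = id := by funext z; simp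
        rw [this, image_id]
      rw [e1, e2]; exact H
    have base_i : r (A ∪ A.image (· - x)) D :=
      hr.weaken ⟨hA.choose, mem_union_left _ hA.choose_spec⟩ (hB.image _)
        (Finset.Subset.refl _) subset_union_right htrans
    have base_ii : r (A ∪ A.image (· + x)) D :=
      hr.weaken ⟨hA.choose, mem_union_left _ hA.choose_spec⟩ hB
        (Finset.Subset.refl _) subset_union_left H
    have key : r (A ∪ (∅ : Finset G).image (· - x) ∪ (∅ : Finset G).image (· + x)) D := by
      apply grid_induction A
        (fun U V => r (A ∪ U.image (· - x) ∪ V.image (· + x)) D)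
      · intro V hV
        exact hr.weaken ⟨hA.choose, mem_union_left _ hA.choose_spec⟩
          hD subset_union_left (Finset.Subset.refl _) base_i
      · intro U hU
        refine hr.weaken ⟨hA.choose, mem_union_left _ hA.choose_spec⟩ hD
          ?_ (Finset.Subset.refl _) base_ii
        exact union_subset (subset_union_left.trans subset_union_left)
          subset_union_right
      · intro U V hU hV a haA haU b hbA hbV h1 h2
        rw [image_insert, union_insert, insert_union] at h1
        rw [image_insert, union_insert] at h2
        exact hr.cutL (u := a - x) (v := b + x) (s := a) (t := b) (by abel)
          (mem_union_left _ (mem_union_left _ haA))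
          (mem_union_left _ (mem_union_left _ hbA)) hD h1 h2
    simpa using key
  · intro H
    have hC0 : (A ∪ A.image (· + x)).Nonempty :=
      ⟨hA.choose, mem_union_left _ hA.choose_spec⟩
    -- translated hypothesis : A + x ⊢ B ∪ (B + x)
    have htrans : r (A.image (· + x)) (B ∪ B.image (· + x)) := by
      apply hr.translate (-x)
      have e1 : (A.image (· + x)).image (· + -x) = A := by
        rw [image_image]
        have : ((· + -x) ∘ (· + x) : G → G) = id := by funext z; simp
        rw [this, image_id]
      have e2 : (B ∪ B.image (· + x)).image (· + -x) = B ∪ B.image (· - x) := by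
        rw [image_union, image_image]
        have e3 : ((· + -x) ∘ (· + x) : G → G) = id := by funext z; simp
        have e4 : ((· + -x) : G → G) = (· - x) := by funext z; simp [sub_eq_add_neg]
        rw [e3, image_id, e4, union_comm]
      rw [e1, e2]; exact H
    have base_i : ∀ V, V ⊆ B → r (A ∪ A.image (· + x))
        (B ∪ B.image (· - x) ∪ V.image (· + x)) := by
      intro V hV
      exact hr.weaken hA ⟨hB.choose, mem_union_left _ hB.choose_spec⟩
        subset_union_left subset_union_left H
    have base_ii : ∀ U, U ⊆ B → r (A ∪ A.image (· + x))
        (B ∪ U.image (· - x) ∪ B.image (· + x)) := by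
      intro U hU
      refine hr.weaken (hA.image _) ⟨hB.choose, mem_union_left _ hB.choose_spec⟩
        subset_union_right ?_ htrans
      exact union_subset (subset_union_left.trans subset_union_left)
        subset_union_right
    have key : r (A ∪ A.image (· + x))
        (B ∪ (∅ : Finset G).image (· - x) ∪ (∅ : Finset G).image (· + x)) := by
      apply grid_induction B
        (fun U V => r (A ∪ A.image (· + x)) (B ∪ U.image (· - x) ∪ V.image (· + x)))
      · exact base_i
      · exact base_ii
      · intro U V hU hV a haA haU b hbA hbV h1 h2
        rw [image_insert, union_insert, insert_union] at h1
        rw [image_insert, union_insert] at h2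
        exact hr.cutR (u := a - x) (v := b + x) (s := a) (t := b) (by abel)
          (mem_union_left _ (mem_union_left _ haA))
          (mem_union_left _ (mem_union_left _ hbA)) hC0 h1 h2
    simpa using key
end

section
/- Let ⊢ be a regular entailment relation on a preordered commutative group G. If 0 ≤ p ≤ q are natural numbers, then {a, a + q·x} ⊢ {a + p·x} for all a, x in G. -/
open Finset Pointwise

section Aux
variable {G : Type*} [AddCommGroup G] [Preorder G]
    [CovariantClass G G (· + ·) (· ≤ ·)] [DecidableEq G]
    {r : Finset G → Finset G → Prop}

/-- Reduction step: if `{0,(n-m)x} ⊢ {mx}` then `{0,nx} ⊢ {mx}`, via a cut at `(n-m)x`. -/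
lemma IsRegularEntailment.step (hr : IsRegularEntailment r) {m n : ℕ} (hm : m ≤ n) (x : G)
    (h : r {0, (n - m) • x} {m • x}) : r {0, n • x} {m • x} := by
  apply hr.cut ((n - m) • x) ⟨0, by simp⟩ ⟨m • x, by simp⟩
  · refine hr.weaken ⟨0, by simp⟩ ⟨m • x, by simp⟩ ?_ (by simp) h
    intro z hz
    simp only [Finset.mem_insert, Finset.mem_singleton] at hz ⊢
    tauto
  · have H := hr.regular (m • x) 0 (-(m • x)) (n • x)
    have e : -(m • x) + n • x = (n - m) • x := by
      rw [sub_nsmul x hm]; abel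
    rw [add_neg_cancel, zero_add, add_zero, e] at H
    refine hr.weaken ⟨0, by simp⟩ ⟨m • x, by simp⟩ ?_ ?_ H <;>
      · intro z hz
        simp only [Finset.mem_insert, Finset.mem_singleton] at hz ⊢
        tauto

lemma IsRegularEntailment.aux (hr : IsRegularEntailment r) :
    ∀ n m : ℕ, m ≤ n → ∀ x : G, r {0, n • x} {m • x} := by
  intro n
  induction n using Nat.strong_induction_on with
  | _ n ih =>
    intro m hm x
    rcases Nat.eq_zero_or_pos m with rfl | hm0
    · simp only [zero_smul]
      have h0 : r ({(0 : G)}) ({(0 : G)}) := hr.of_le le_rfl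
      exact hr.weaken ⟨0, by simp⟩ ⟨0, by simp⟩ (by simp) (by simp) h0
    rcases eq_or_lt_of_le hm with rfl | hmn
    · have h0 : r ({m • x}) ({m • x}) := hr.of_le le_rfl
      exact hr.weaken ⟨m • x, by simp⟩ ⟨m • x, by simp⟩ (by simp) (by simp) h0
    by_cases h2 : 2 * m ≤ n
    · exact hr.step hm x (ih (n - m) (by omega) m (by omega) x)
    · apply hr.translate (-(n • x))
      have hA : ({0, n • x} : Finset G).image (· + -(n • x)) = {0, n • (-x)} := by
        simp only [Finset.image_insert, Finset.image_singleton, zero_add, add_neg_cancel,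
          smul_neg]
        rw [Finset.pair_comm]
      have hB : ({m • x} : Finset G).image (· + -(n • x)) = {(n - m) • (-x)} := by
        rw [Finset.image_singleton]
        congr 1
        rw [smul_neg, sub_nsmul x hm]
        abel
      rw [hA, hB]
      exact hr.step (by omega) (-x) (by
        have e : n - (n - m) = m := by omega
        rw [e]
        exact ih m hmn (n - m) (by omega) (-x))

end Aux

theorem regular_entailment_convexity {G : Type*} [AddCommGroup G] [Preorder G]
    [CovariantClass G G (· + ·) (· ≤ ·)] [DecidableEq G]
    (r : Finset G → Finset G → Prop) (hr : IsRegularEntailment r)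
    (p q : ℕ) (hpq : p ≤ q) (a x : G) :
    r {a, a + q • x} {a + p • x} := by
  apply hr.translate (-a)
  have hA : ({a, a + q • x} : Finset G).image (· + -a) = {0, q • x} := by
    simp [Finset.image_insert, Finset.image_singleton, add_comm, add_assoc]
  have hB : ({a + p • x} : Finset G).image (· + -a) = {p • x} := by
    simp [add_comm, add_assoc]
  rw [hA, hB]
  exact hr.aux q p hpq x
end

section
/- Let ⊢ be a regular entailment relation on a preordered commutative group G. Then A ⊢ {b₁, ..., bₘ} if and only if (A - b₁) ∪ (A - b₂) ∪ ... ∪ (A - bₘ) ⊢ {0}. -/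
open Finset Pointwise

namespace RegEntAux

set_option linter.unusedSectionVars false

variable {G : Type*} [AddCommGroup G] [Preorder G]
    [CovariantClass G G (· + ·) (· ≤ ·)] [DecidableEq G]
    {r : Finset G → Finset G → Prop}

lemma translate_fwd (hr : IsRegularEntailment r) (x : G) {P Q : Finset G} (h : r P Q) :
    r (P.image (· + x)) (Q.image (· + x)) := by
  apply hr.translate (-x)
  have e : ∀ S : Finset G, (S.image (· + x)).image (· + -x) = S := by
    intro S
    rw [Finset.image_image]
    simp [Function.comp]
  rw [e, e]
  exact h

lemma reg' (hr : IsRegularEntailment r) (z w v : G) : r {z, w + v} {w, v + z} := by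
  have h := hr.regular (w - v) v (z - w + v) w
  have e1 : w - v + (z - w + v) = z := by abel
  have e2 : v + w = w + v := add_comm v w
  have e3 : w - v + v = w := by abel
  have e4 : z - w + v + w = v + z := by abel
  rw [e1, e2, e3, e4] at h
  exact h

lemma insert_shift_left (hr : IsRegularEntailment r) {X Y : Finset G} {z v w : G}
    (hz : z ∈ X) (hvz : v + z ∈ Y) (h : r (insert w X) Y) :
    r (insert (w + v) X) Y := by
  apply hr.cut w (Finset.insert_nonempty _ _) ⟨_, hvz⟩
  · exact hr.weaken (Finset.insert_nonempty _ _) ⟨_, hvz⟩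
      (Finset.insert_subset_insert _ (Finset.subset_insert _ _)) (Finset.Subset.refl _) h
  · exact hr.weaken ⟨z, by simp [hz]⟩ ⟨w, by simp⟩
      (by intro t ht; simp only [Finset.mem_insert, Finset.mem_singleton] at ht
          rcases ht with h1 | h1 <;> simp [h1, hz])
      (by intro t ht; simp only [Finset.mem_insert, Finset.mem_singleton] at ht
          rcases ht with h1 | h1 <;> simp [h1, hvz])
      (reg' hr z w v)

lemma insert_shift_right (hr : IsRegularEntailment r) {X Y : Finset G} {u w : G}
    (hu : u ∈ X) (h0 : (0:G) ∈ Y) (h : r X (insert w Y)) :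
    r X (insert (w + u) Y) := by
  apply hr.cut w ⟨_, hu⟩ (Finset.insert_nonempty _ _)
  · have hreg : r {w, u} ({0, w + u} : Finset G) := by
      have h2 := reg' hr w 0 u
      rw [zero_add, add_comm u w] at h2
      exact h2
    exact hr.weaken ⟨w, by simp⟩ ⟨(0:G), by simp⟩
      (by intro t ht; simp only [Finset.mem_insert, Finset.mem_singleton] at ht
          rcases ht with h1 | h1 <;> simp [h1, hu])
      (by intro t ht; simp only [Finset.mem_insert, Finset.mem_singleton] at ht
          rcases ht with h1 | h1 <;> simp [h1, h0])
      hreg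
  · exact hr.weaken ⟨_, hu⟩ (Finset.insert_nonempty _ _)
      (Finset.Subset.refl _)
      (by intro t ht; simp only [Finset.mem_insert] at ht ⊢; tauto) h

lemma shiftR (hr : IsRegularEntailment r) {X : Finset G} {u : G} (hu : u ∈ X) :
    ∀ (W Y : Finset G), (0:G) ∈ Y → r X (Y ∪ W) → r X (Y ∪ W.image (· + u)) := by
  intro W
  induction W using Finset.induction_on with
  | empty => intro Y h0 h; simpa using h
  | insert _ _ hw ih =>
    rename_i w W
    intro Y h0 h
    rw [Finset.union_insert] at h
    rw [← Finset.insert_union] at h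
    have h2 := ih (insert w Y) (by simp [h0]) h
    rw [Finset.insert_union] at h2
    have h3 := insert_shift_right hr hu (Finset.mem_union_left _ h0) h2
    rw [Finset.image_insert, Finset.union_insert]
    exact h3

lemma shiftL (hr : IsRegularEntailment r) {Y : Finset G} {z v : G} (hvz : v + z ∈ Y) :
    ∀ (W X : Finset G), z ∈ X → r (X ∪ W) Y → r (X ∪ W.image (· + v)) Y := by
  intro W
  induction W using Finset.induction_on with
  | empty => intro X hz h; simpa using h
  | insert _ _ hw ih =>
    rename_i w W
    intro X hz h
    rw [Finset.union_insert, ← Finset.insert_union] at h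
    rw [Finset.insert_union] at h
    have h2 : r (insert (w + v) (X ∪ W)) Y :=
      insert_shift_left hr (Finset.mem_union_left _ hz) hvz h
    rw [← Finset.insert_union] at h2
    have h3 := ih (insert (w + v) X) (Finset.mem_insert_of_mem hz) h2
    rw [Finset.image_insert, Finset.union_insert, Finset.insert_union] at *
    exact h3

lemma cutR (hr : IsRegularEntailment r) {X : Finset G} (hX : X.Nonempty) :
    ∀ (S Y : Finset G), Y.Nonempty → r X (Y ∪ S) → (∀ t ∈ S, r (insert t X) Y) → r X Y := by
  intro S
  induction S using Finset.induction_on with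
  | empty => intro Y hY h _; simpa using h
  | insert _ _ hw ih =>
    rename_i t S
    intro Y hY h hall
    have h1 : r X (Y ∪ S) := by
      apply hr.cut t hX (by exact hY.mono (Finset.subset_union_left))
      · exact hr.weaken (Finset.insert_nonempty _ _) hY (Finset.Subset.refl _)
          Finset.subset_union_left (hall t (by simp))
      · rw [Finset.union_insert] at h; exact h
    exact ih Y hY h1 (fun t' ht' => hall t' (by simp [ht']))

lemma cutL (hr : IsRegularEntailment r) {Y : Finset G} (hY : Y.Nonempty) :
    ∀ (S X : Finset G), X.Nonempty → r (X ∪ S) Y → (∀ t ∈ S, r X (insert t Y)) → r X Y := by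
  intro S
  induction S using Finset.induction_on with
  | empty => intro X hX h _; simpa using h
  | insert _ _ hw ih =>
    rename_i t S
    intro X hX h hall
    have h1 : r (X ∪ S) Y := by
      apply hr.cut t (hX.mono Finset.subset_union_left) hY
      · rw [Finset.union_insert] at h
        exact h
      · exact hr.weaken hX (Finset.insert_nonempty _ _) Finset.subset_union_left
          (Finset.Subset.refl _) (hall t (by simp))
    exact ih X hX h1 (fun t' ht' => hall t' (by simp [ht']))

lemma image_sub_eq {D : Finset G} {d₁ : G} (h : d₁ ∈ D) (d : G) :
    D.image (· - d) = insert (d₁ - d) ((D.erase d₁).image (· - d)) := by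
  conv_lhs => rw [← Finset.insert_erase h]
  rw [Finset.image_insert]

lemma TL (hr : IsRegularEntailment r) :
    ∀ (n : ℕ) (D : Finset G), D.card ≤ n → D.Nonempty →
    ∀ (X : Finset G), X.Nonempty →
    (∀ d ∈ D, r X (D.image (· - d))) → r X ({0} : Finset G) := by
  intro n
  induction n with
  | zero => intro D hc hD; exact absurd (Finset.card_pos.mpr hD) (by omega)
  | succ n ih =>
    intro D hc hD X hX hfacts
    obtain ⟨d₀, hd₀⟩ := hD
    rcases (D.erase d₀).eq_empty_or_nonempty with he | ⟨d', hd'⟩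
    · have hDs : D = {d₀} := by
        apply Finset.eq_singleton_iff_unique_mem.mpr
        refine ⟨hd₀, fun x hx => ?_⟩
        by_contra hne
        exact absurd (Finset.mem_erase.mpr ⟨hne, hx⟩) (by simp [he])
      have := hfacts d₀ hd₀
      rw [hDs] at this
      simpa using this
    · apply cutR hr hX ((D.erase d₀).image (· - d₀)) {0} (by simp)
      · have := hfacts d₀ hd₀
        rw [image_sub_eq hd₀ d₀, sub_self, Finset.insert_eq] at this
        exact this
      · intro t ht
        obtain ⟨d₁, hd₁, rfl⟩ := Finset.mem_image.mp ht
        set E := D.erase d₁ with hE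
        have hd₁D : d₁ ∈ D := Finset.mem_of_mem_erase hd₁
        have hd₁ne : d₁ ≠ d₀ := Finset.ne_of_mem_erase hd₁
        have hd₀E : d₀ ∈ E := Finset.mem_erase.mpr ⟨fun h => hd₁ne h.symm, hd₀⟩
        apply ih E (by rw [hE, Finset.card_erase_of_mem hd₁D]; omega) ⟨d₀, hd₀E⟩
          (insert (d₁ - d₀) X) (Finset.insert_nonempty _ _)
        intro d hd
        have hdD : d ∈ D := Finset.mem_of_mem_erase hd
        have prem1 : r (insert (d₁ - d) (insert (d₁ - d₀) X)) (E.image (· - d)) := by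
          have f1 : r (insert (d₁ - d) (insert (d₁ - d₀) X)) (D.image (· - d₁)) :=
            hr.weaken (B' := D.image (· - d₁)) hX
              ⟨d₁ - d₁, Finset.mem_image.mpr ⟨d₁, hd₁D, rfl⟩⟩
              ((Finset.subset_insert _ _).trans (Finset.subset_insert _ _))
              (Finset.Subset.refl _) (hfacts d₁ hd₁D)
          rw [image_sub_eq hd₁D d₁, sub_self, Finset.insert_eq] at f1
          have f2 := shiftR hr (Finset.mem_insert_self (d₁ - d) _)
            (E.image (· - d₁)) {0} (by simp) f1
          rw [Finset.image_image] at f2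
          have ecomp : ((· + (d₁ - d)) ∘ (· - d₁)) = (fun e : G => e - d) := by
            funext e
            simp only [Function.comp_apply]
            exact sub_add_sub_cancel e d₁ d
          rw [ecomp] at f2
          have : ({0} : Finset G) ∪ E.image (· - d) = E.image (· - d) :=
            Finset.union_eq_right.mpr
              (Finset.singleton_subset_iff.mpr (Finset.mem_image.mpr ⟨d, hd, sub_self d⟩))
          rwa [this] at f2
        have prem2 : r (insert (d₁ - d₀) X) (insert (d₁ - d) (E.image (· - d))) := by
          have := hfacts d hdD
          rw [image_sub_eq hd₁D d] at this
          exact hr.weaken hX (Finset.insert_nonempty _ _)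
            ((Finset.subset_insert _ _)) (Finset.Subset.refl _) this
        exact hr.cut (d₁ - d) (Finset.insert_nonempty _ _)
          (⟨d - d, Finset.mem_image.mpr ⟨d, hd, rfl⟩⟩) prem1 prem2

lemma TL' (hr : IsRegularEntailment r) :
    ∀ (n : ℕ) (D : Finset G), D.card ≤ n → D.Nonempty →
    ∀ (A Y : Finset G), A.Nonempty → Y.Nonempty →
    (∀ d ∈ D, r (D.biUnion (fun d' => A.image (· + (d - d')))) Y) → r A Y := by
  intro n
  induction n with
  | zero => intro D hc hD; exact absurd (Finset.card_pos.mpr hD) (by omega)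
  | succ n ih =>
    intro D hc hD A Y hA hY hfacts
    obtain ⟨d₀, hd₀⟩ := hD
    rcases (D.erase d₀).eq_empty_or_nonempty with he | ⟨d', hd'⟩
    · have hDs : D = {d₀} := by
        apply Finset.eq_singleton_iff_unique_mem.mpr
        refine ⟨hd₀, fun x hx => ?_⟩
        by_contra hne
        exact absurd (Finset.mem_erase.mpr ⟨hne, hx⟩) (by simp [he])
      have h0 := hfacts d₀ hd₀
      rw [hDs, Finset.singleton_biUnion] at h0
      simpa using h0
    · set J := (D.erase d₀).biUnion (fun d₁ => A.image (· + (d₀ - d₁))) with hJ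
      have hsplit : D.biUnion (fun d' => A.image (· + (d₀ - d'))) = A ∪ J := by
        conv_lhs => rw [← Finset.insert_erase hd₀]
        rw [Finset.biUnion_insert]
        congr 1
        simp
      have h0 : r (A ∪ J) Y := by
        have := hfacts d₀ hd₀
        rwa [hsplit] at this
      apply cutL hr hY J A hA h0
      intro t ht
      obtain ⟨d₁, hd₁, ht2⟩ := Finset.mem_biUnion.mp ht
      obtain ⟨a, ha, rfl⟩ := Finset.mem_image.mp ht2
      apply ih (D.erase d₀) (by rw [Finset.card_erase_of_mem hd₀]; omega) ⟨d₁, hd₁⟩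
        A _ hA (Finset.insert_nonempty _ _)
      intro d hd
      have hdD : d ∈ D := Finset.mem_of_mem_erase hd
      have f1 : r (A.image (· + (d - d₀)) ∪
          (D.erase d₀).biUnion (fun d' => A.image (· + (d - d')))) (insert (a + (d₀ - d₁)) Y) := by
        have f0 := hfacts d hdD
        have hsplit2 : D.biUnion (fun d' => A.image (· + (d - d'))) =
            A.image (· + (d - d₀)) ∪ (D.erase d₀).biUnion (fun d' => A.image (· + (d - d'))) := by
          conv_lhs => rw [← Finset.insert_erase hd₀]
          rw [Finset.biUnion_insert]
        rw [hsplit2] at f0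
        exact hr.weaken ⟨a + (d - d₀), Finset.mem_union_left _
            (Finset.mem_image.mpr ⟨a, ha, rfl⟩)⟩ hY (Finset.Subset.refl _)
          (Finset.subset_insert _ _) f0
      rw [Finset.union_comm] at f1
      have hz : a ∈ (D.erase d₀).biUnion (fun d' => A.image (· + (d - d'))) :=
        Finset.mem_biUnion.mpr ⟨d, hd, Finset.mem_image.mpr ⟨a, ha, by simp⟩⟩
      have hvz : (d₀ - d₁) + a ∈ insert (a + (d₀ - d₁)) Y := by
        rw [add_comm]; exact Finset.mem_insert_self _ _
      have f2 := shiftL hr hvz (A.image (· + (d - d₀)))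
        ((D.erase d₀).biUnion (fun d' => A.image (· + (d - d')))) hz f1
      rw [Finset.image_image] at f2
      have ecomp : ((· + (d₀ - d₁)) ∘ (· + (d - d₀))) = (fun a' : G => a' + (d - d₁)) := by
        funext a'
        simp only [Function.comp_apply]
        rw [add_assoc, sub_add_sub_cancel]
      rw [ecomp] at f2
      have hsub : A.image (fun a' => a' + (d - d₁)) ⊆
          (D.erase d₀).biUnion (fun d' => A.image (· + (d - d'))) :=
        Finset.subset_biUnion_of_mem (fun d' => A.image (· + (d - d'))) hd₁
      rwa [Finset.union_eq_left.mpr hsub] at f2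

end RegEntAux

theorem regular_entailment_reduce_right {G : Type*} [AddCommGroup G] [Preorder G]
    [CovariantClass G G (· + ·) (· ≤ ·)] [DecidableEq G]
    (r : Finset G → Finset G → Prop) (hr : IsRegularEntailment r)
    (A B : Finset G) (hA : A.Nonempty) (hB : B.Nonempty) :
    r A B ↔ r (B.biUnion (fun b => A.image (fun a => a - b))) {0} := by
  classical
  obtain ⟨a₀, ha₀⟩ := id hA
  have hCne : (B.biUnion (fun b => A.image (fun a => a - b))).Nonempty := by
    obtain ⟨b₀, hb₀⟩ := hB
    exact ⟨a₀ - b₀, Finset.mem_biUnion.mpr ⟨b₀, hb₀, Finset.mem_image.mpr ⟨a₀, ha₀, rfl⟩⟩⟩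
  constructor
  · intro h
    apply RegEntAux.TL hr B.card B le_rfl hB _ hCne
    intro d hd
    have h1 := RegEntAux.translate_fwd hr (-d) h
    have e : ∀ S : Finset G, S.image (· + -d) = S.image (· - d) := by
      intro S; congr 1; funext x; rw [sub_eq_add_neg]
    rw [e, e] at h1
    exact hr.weaken (hA.image _) (hB.image _)
      (Finset.subset_biUnion_of_mem (fun b => A.image (fun a => a - b)) hd)
      (Finset.Subset.refl _) h1
  · intro h
    apply RegEntAux.TL' hr B.card B le_rfl hB A B hA hB
    intro d hd
    have h1 := RegEntAux.translate_fwd hr d h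
    have e0 : (({0} : Finset G).image (· + d)) = {d} := by simp
    have e1 : ((B.biUnion (fun b => A.image (fun a => a - b))).image (· + d)) =
        B.biUnion (fun b => A.image (· + (d - b))) := by
      rw [Finset.biUnion_image]
      congr 1
      funext b
      rw [Finset.image_image]
      congr 1
      funext a
      simp only [Function.comp_apply]
      abel
    rw [e0, e1] at h1
    exact hr.weaken ⟨a₀ + (d - d), Finset.mem_biUnion.mpr
        ⟨d, hd, Finset.mem_image.mpr ⟨a₀, ha₀, rfl⟩⟩⟩
      (Finset.singleton_nonempty d) (Finset.Subset.refl _)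
      (Finset.singleton_subset_iff.mpr hd) h1
end

section
/- Let ⊢ be a regular entailment relation on a preordered commutative group G. Then A ⊢ B if and only if A - B ⊢ {0}, if and only if {0} ⊢ B - A, where A - B = {a - b : a ∈ A, b ∈ B}. -/
open Finset Pointwise

set_option linter.unusedSectionVars false

namespace RegEnt

variable {G : Type*} [AddCommGroup G] [Preorder G]
    [CovariantClass G G (· + ·) (· ≤ ·)] [DecidableEq G]
    {r : Finset G → Finset G → Prop}

lemma reg2 (hr : IsRegularEntailment r) (u v s t : G) (h : u + v = s + t) :
    r {u, v} {s, t} := by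
  have h0 := hr.regular 0 s u (v - s)
  have e1 : (0:G) + u = u := zero_add u
  have e2 : s + (v - s) = v := by abel
  have e3 : (0:G) + s = s := zero_add s
  have e4 : u + (v - s) = t := by
    have e : u + (v - s) = u + v - s := by abel
    rw [e, h]; abel
  rw [e1, e2, e3, e4] at h0
  exact h0

lemma image_add_neg (x : G) (S : Finset G) : (S.image (· + x)).image (· + (-x)) = S := by
  rw [Finset.image_image]
  have e : ((· + (-x)) ∘ (· + x)) = (id : G → G) := by funext y; simp
  rw [e, Finset.image_id]

lemma trans_fwd (hr : IsRegularEntailment r) {A B : Finset G} (x : G) (h : r A B) :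
    r (A.image (· + x)) (B.image (· + x)) := by
  apply hr.translate (-x)
  rw [image_add_neg, image_add_neg]
  exact h

/-- left elimination -/
lemma elimL (hr : IsRegularEntailment r) :
    ∀ (C Γ Δ : Finset G), Γ.Nonempty → Δ.Nonempty → r (Γ ∪ C) Δ →
      (∀ c ∈ C, r Γ (insert c Δ)) → r Γ Δ := by
  intro C
  induction C using Finset.induction_on with
  | empty => intro Γ Δ _ _ h _; simpa using h
  | @insert c C' hc IH =>
    intro Γ Δ hΓ hΔ h hsub
    have h1 : r (insert c Γ) Δ := by
      apply IH (insert c Γ) Δ (hΓ.mono (Finset.subset_insert _ _)) hΔ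
      · have e : Γ ∪ insert c C' = insert c Γ ∪ C' := by
          ext y; simp [Finset.mem_union, Finset.mem_insert]
        rwa [e] at h
      · intro d hd
        exact hr.weaken hΓ ⟨d, Finset.mem_insert_self d Δ⟩ (Finset.subset_insert _ _)
          (Finset.Subset.refl _) (hsub d (Finset.mem_insert_of_mem hd))
    exact hr.cut c hΓ hΔ h1 (hsub c (Finset.mem_insert_self c C'))

/-- right elimination -/
lemma elimR (hr : IsRegularEntailment r) :
    ∀ (C Γ Δ : Finset G), Γ.Nonempty → Δ.Nonempty → r Γ (Δ ∪ C) →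
      (∀ c ∈ C, r (insert c Γ) Δ) → r Γ Δ := by
  intro C
  induction C using Finset.induction_on with
  | empty => intro Γ Δ _ _ h _; simpa using h
  | @insert c C' hc IH =>
    intro Γ Δ hΓ hΔ h hsub
    have h1 : r Γ (insert c Δ) := by
      apply IH Γ (insert c Δ) hΓ (hΔ.mono (Finset.subset_insert _ _))
      · have e : Δ ∪ insert c C' = insert c Δ ∪ C' := by
          ext y; simp [Finset.mem_union, Finset.mem_insert]
        rwa [e] at h
      · intro d hd
        exact hr.weaken ⟨d, Finset.mem_insert_self d Γ⟩ hΔ (Finset.Subset.refl _)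
          (Finset.subset_insert _ _) (hsub d (Finset.mem_insert_of_mem hd))
    exact hr.cut c hΓ hΔ (hsub c (Finset.mem_insert_self c C')) h1

/-- zero-sum pairing -/
lemma zpair (hr : IsRegularEntailment r) :
    ∀ (n : ℕ) (lc lb : List G) (Γ Δ : Finset G),
      lc.length = n + 1 → lb.length = n + 1 →
      (∀ x ∈ lc, x ∈ Γ) → (∀ x ∈ lb, x ∈ Δ) → lc.sum = lb.sum → r Γ Δ := by
  intro n
  induction n with
  | zero =>
    intro lc lb Γ Δ hlc hlb hcΓ hbΔ hsum
    match lc, lb with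
    | [c], [b] =>
      simp only [List.sum_cons, List.sum_nil, add_zero] at hsum
      exact hr.weaken ⟨c, Finset.mem_singleton_self c⟩ ⟨b, Finset.mem_singleton_self b⟩
        (Finset.singleton_subset_iff.2 (hcΓ c (by simp)))
        (Finset.singleton_subset_iff.2 (hbΔ b (by simp)))
        (hr.of_le (le_of_eq hsum))
  | succ n IH =>
    intro lc lb Γ Δ hlc hlb hcΓ hbΔ hsum
    match lc, lb with
    | c1 :: c2 :: ct, b1 :: bt =>
      simp only [List.length_cons, Nat.succ.injEq] at hlc hlb
      set c' : G := c1 + c2 - b1 with hc'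
      have hsum' : (c' :: ct).sum = bt.sum := by
        simp only [List.sum_cons] at hsum ⊢
        have e : c' + ct.sum = c1 + (c2 + ct.sum) - b1 := by rw [hc']; abel
        rw [e, hsum]; abel
      have h1 : r (insert c' Γ) Δ := by
        apply IH (c' :: ct) bt (insert c' Γ) Δ (by simp [hlc]) hlb
        · intro x hx
          rcases List.mem_cons.1 hx with rfl | hx
          · exact Finset.mem_insert_self _ _
          · exact Finset.mem_insert_of_mem (hcΓ x (by simp [hx]))
        · intro x hx; exact hbΔ x (by simp [hx])
        · exact hsum'
      have hΓne : Γ.Nonempty := ⟨c1, hcΓ c1 (by simp)⟩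
      have hΔne : Δ.Nonempty := ⟨b1, hbΔ b1 (by simp)⟩
      have h2 : r Γ (insert c' Δ) := by
        have hreg : r ({c1, c2} : Finset G) {b1, c'} := reg2 hr c1 c2 b1 c' (by rw [hc']; abel)
        apply hr.weaken ⟨c1, by simp⟩ ⟨b1, by simp⟩ ?_ ?_ hreg
        · exact Finset.insert_subset (hcΓ c1 (by simp))
            (Finset.singleton_subset_iff.2 (hcΓ c2 (by simp)))
        · exact Finset.insert_subset (Finset.mem_insert_of_mem (hbΔ b1 (by simp)))
            (Finset.singleton_subset_iff.2 (Finset.mem_insert_self _ _))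
      exact hr.cut c' hΓne hΔne h1 h2

lemma sub_nonempty {A B : Finset G} (hA : A.Nonempty) (hB : B.Nonempty) :
    (B - A).Nonempty := by
  obtain ⟨a, ha⟩ := hA; obtain ⟨b, hb⟩ := hB
  exact ⟨b - a, Finset.mem_sub.2 ⟨b, hb, a, ha, rfl⟩⟩

lemma fwd_core (hr : IsRegularEntailment r) {A B : Finset G}
    (hA : A.Nonempty) (hB : B.Nonempty) (h : r A B) :
    ∀ (n : ℕ) (V S : Finset G) (a : G), (A \ V).card = n → a ∈ V → V ⊆ A →
    (∀ x ∈ V, ∃ l : List G, (∀ y ∈ l, y ∈ S) ∧ l.sum = a - x) →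
    r {0} ((B - A) ∪ S) := by
  intro n
  induction n using Nat.strong_induction_on with
  | _ n IH =>
    intro V S a hcard haV hVA hinv
    have hBA : (B - A).Nonempty := sub_nonempty hA hB
    have hΔne : ((B - A) ∪ S).Nonempty := hBA.mono Finset.subset_union_left
    apply elimL hr (A.image (· + (-a))) {0} ((B - A) ∪ S) ⟨0, Finset.mem_singleton_self 0⟩ hΔne
    · -- base
      apply hr.weaken (hA.image _) (hB.image _) ?_ ?_ (trans_fwd hr (-a) h)
      · exact Finset.subset_union_right
      · intro y hy
        obtain ⟨b, hb, rfl⟩ := Finset.mem_image.1 hy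
        exact Finset.mem_union_left _
          (Finset.mem_sub.2 ⟨b, hb, a, hVA haV, by rw [sub_eq_add_neg]⟩)
    · -- subgoals
      intro c hc
      obtain ⟨a'', ha'', rfl⟩ := Finset.mem_image.1 hc
      by_cases hmem : a'' ∈ V
      · obtain ⟨l, hlS, hlsum⟩ := hinv a'' hmem
        apply zpair hr l.length (List.replicate (l.length + 1) 0) (l ++ [a'' + -a])
        · simp
        · simp
        · intro x hx
          rw [List.eq_of_mem_replicate hx]; exact Finset.mem_singleton_self 0
        · intro x hx
          rcases List.mem_append.1 hx with hx | hx
          · exact Finset.mem_insert_of_mem (Finset.mem_union_right _ (hlS x hx))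
          · rw [List.mem_singleton.1 hx]; exact Finset.mem_insert_self _ _
        · rw [List.sum_replicate, smul_zero, List.sum_append, List.sum_singleton, hlsum]
          abel
      · have hmemd : a'' ∈ A \ V := Finset.mem_sdiff.2 ⟨ha'', hmem⟩
        have hlt : (A \ insert a'' V).card < n := by
          rw [← hcard]
          have e : A \ insert a'' V = (A \ V).erase a'' := by
            ext y; simp [Finset.mem_sdiff, Finset.mem_insert, Finset.mem_erase]; tauto
          rw [e]
          exact Finset.card_erase_lt_of_mem hmemd
        have hrec := IH _ hlt (insert a'' V) (insert (a'' + -a) S) a'' rfl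
          (Finset.mem_insert_self _ _)
          (Finset.insert_subset ha'' hVA) ?_
        · rw [Finset.union_insert] at hrec
          exact hrec
        · intro x hx
          rcases Finset.mem_insert.1 hx with rfl | hx
          · exact ⟨[], by simp, by simp⟩
          · obtain ⟨l, hlS, hlsum⟩ := hinv x hx
            refine ⟨l ++ [a'' + -a], ?_, ?_⟩
            · intro y hy
              rcases List.mem_append.1 hy with hy | hy
              · exact Finset.mem_insert_of_mem (hlS y hy)
              · rw [List.mem_singleton.1 hy]; exact Finset.mem_insert_self _ _
            · rw [List.sum_append, List.sum_singleton, hlsum]; abel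

lemma F1 (hr : IsRegularEntailment r) {A B : Finset G}
    (hA : A.Nonempty) (hB : B.Nonempty) (h : r A B) : r {0} (B - A) := by
  obtain ⟨a, ha⟩ := id hA
  have := fwd_core hr hA hB h (A \ {a}).card {a} ∅ a rfl (Finset.mem_singleton_self a)
    (Finset.singleton_subset_iff.2 ha)
    (by intro x hx; rw [Finset.mem_singleton.1 hx]; exact ⟨[], by simp, by simp⟩)
  simpa using this

lemma conv_core (hr : IsRegularEntailment r) {A B : Finset G}
    (hA : A.Nonempty) (hB : B.Nonempty) (h : r {0} (B - A)) :
    ∀ (n : ℕ) (V Es : Finset G) (a : G), (A \ V).card = n → a ∈ V → V ⊆ A →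
    (∀ x ∈ V, ∃ (lc lb : List G), lc.length = lb.length ∧ (∀ y ∈ lc, y ∈ Es) ∧
      (∀ y ∈ lb, y ∈ B) ∧ lc.sum = lb.sum + (x - a)) →
    r (A ∪ Es) B := by
  intro n
  induction n using Nat.strong_induction_on with
  | _ n IH =>
    intro V Es a hcard haV hVA hinv
    have hΓne : (A ∪ Es).Nonempty := hA.mono Finset.subset_union_left
    apply elimR hr ((B - A).image (· + a)) (A ∪ Es) B hΓne hB
    · -- base
      apply hr.weaken ((Finset.singleton_nonempty (0:G)).image _)
        ((sub_nonempty hA hB).image _) ?_ Finset.subset_union_right (trans_fwd hr a h)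
      · intro y hy
        obtain ⟨z, hz, rfl⟩ := Finset.mem_image.1 hy
        have hz0 : z = 0 := Finset.mem_singleton.1 hz
        subst hz0
        rw [zero_add]
        exact Finset.mem_union_left _ (hVA haV)
    · -- subgoals
      intro c hc
      obtain ⟨y, hy, rfl⟩ := Finset.mem_image.1 hc
      obtain ⟨b, hb, a'', ha'', rfl⟩ := Finset.mem_sub.1 hy
      by_cases hmem : a'' ∈ V
      · obtain ⟨lc, lb, hlen, hlcE, hlbB, hsum⟩ := hinv a'' hmem
        apply zpair hr lc.length (lc ++ [b - a'' + a]) (lb ++ [b])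
        · simp
        · simp [← hlen]
        · intro x hx
          rcases List.mem_append.1 hx with hx | hx
          · exact Finset.mem_insert_of_mem (Finset.mem_union_right _ (hlcE x hx))
          · rw [List.mem_singleton.1 hx]; exact Finset.mem_insert_self _ _
        · intro x hx
          rcases List.mem_append.1 hx with hx | hx
          · exact hlbB x hx
          · rw [List.mem_singleton.1 hx]; exact hb
        · rw [List.sum_append, List.sum_append, List.sum_singleton, List.sum_singleton, hsum]
          abel
      · have hmemd : a'' ∈ A \ V := Finset.mem_sdiff.2 ⟨ha'', hmem⟩
        have hlt : (A \ insert a'' V).card < n := by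
          rw [← hcard]
          have e : A \ insert a'' V = (A \ V).erase a'' := by
            ext z; simp [Finset.mem_sdiff, Finset.mem_insert, Finset.mem_erase]; tauto
          rw [e]
          exact Finset.card_erase_lt_of_mem hmemd
        have hrec := IH _ hlt (insert a'' V) (insert (b - a'' + a) Es) a'' rfl
          (Finset.mem_insert_self _ _) (Finset.insert_subset ha'' hVA) ?_
        · rw [Finset.union_insert] at hrec
          exact hrec
        · intro x hx
          rcases Finset.mem_insert.1 hx with rfl | hx
          · exact ⟨[], [], rfl, by simp, by simp, by simp⟩
          · obtain ⟨lc, lb, hlen, hlcE, hlbB, hsum⟩ := hinv x hx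
            refine ⟨lc ++ [b - a'' + a], lb ++ [b], by simp [hlen], ?_, ?_, ?_⟩
            · intro z hz
              rcases List.mem_append.1 hz with hz | hz
              · exact Finset.mem_insert_of_mem (hlcE z hz)
              · rw [List.mem_singleton.1 hz]; exact Finset.mem_insert_self _ _
            · intro z hz
              rcases List.mem_append.1 hz with hz | hz
              · exact hlbB z hz
              · rw [List.mem_singleton.1 hz]; exact hb
            · rw [List.sum_append, List.sum_append, List.sum_singleton, List.sum_singleton, hsum]
              abel

lemma C1 (hr : IsRegularEntailment r) {A B : Finset G}
    (hA : A.Nonempty) (hB : B.Nonempty) (h : r {0} (B - A)) : r A B := by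
  obtain ⟨a, ha⟩ := id hA
  have := conv_core hr hA hB h (A \ {a}).card {a} ∅ a rfl (Finset.mem_singleton_self a)
    (Finset.singleton_subset_iff.2 ha)
    (by intro x hx; rw [Finset.mem_singleton.1 hx]
        exact ⟨[], [], rfl, by simp, by simp, by simp⟩)
  simpa using this

lemma img_neg_neg (S : Finset G) : (S.image (fun y : G => -y)).image (fun y : G => -y) = S := by
  rw [Finset.image_image]
  have e : ((fun y : G => -y) ∘ (fun y : G => -y)) = id := by funext y; simp
  rw [e, Finset.image_id]

lemma L1 (A B : Finset G) :
    ((A.image (fun y : G => -y)) - (B.image (fun y : G => -y))).image (fun y : G => -y)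
      = A - B := by
  ext x
  simp only [Finset.mem_image, Finset.mem_sub]
  constructor
  · rintro ⟨y, ⟨u, ⟨a, ha, rfl⟩, v, ⟨b, hb, rfl⟩, rfl⟩, rfl⟩
    exact ⟨a, ha, b, hb, by abel⟩
  · rintro ⟨a, ha, b, hb, rfl⟩
    exact ⟨-a - -b, ⟨-a, ⟨a, ha, rfl⟩, -b, ⟨b, hb, rfl⟩, rfl⟩, by abel⟩

lemma dual (hr : IsRegularEntailment r) :
    IsRegularEntailment
      (fun X Y : Finset G => r (Y.image (fun y : G => -y)) (X.image (fun y : G => -y))) := by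
  constructor
  · intro A A' B B' hA' hB' hAA hBB h
    exact hr.weaken (hB'.image _) (hA'.image _) (Finset.image_subset_image hBB)
      (Finset.image_subset_image hAA) h
  · intro A B x hA hB h1 h2
    simp only [Finset.image_insert] at h1 h2
    exact hr.cut (-x) (hB.image _) (hA.image _) h2 h1
  · intro a b hab
    simp only [Finset.image_singleton]
    have h2 := add_le_add_left hab (-a + -b)
    have e1 : -a + -b + a = -b := by abel
    have e2 : -a + -b + b = -a := by abel
    rw [add_comm a, add_comm b, e1, e2] at h2
    exact hr.of_le h2
  · intro A B x h
    simp only at h ⊢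
    apply hr.translate (-x)
    have e : ∀ S : Finset G,
        (S.image (fun y : G => -y)).image (· + (-x)) = (S.image (· + x)).image (fun y : G => -y) := by
      intro S
      rw [Finset.image_image, Finset.image_image]
      congr 1
      funext y
      show -y + -x = -(y + x)
      abel
    rw [e, e]
    exact h
  · intro a b x y
    simp only [Finset.image_insert, Finset.image_singleton]
    exact reg2 hr _ _ _ _ (by abel)

end RegEnt

theorem regular_entailment_minkowski {G : Type*} [AddCommGroup G] [Preorder G]
    [CovariantClass G G (· + ·) (· ≤ ·)] [DecidableEq G]
    (r : Finset G → Finset G → Prop) (hr : IsRegularEntailment r)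
    (A B : Finset G) (hA : A.Nonempty) (hB : B.Nonempty) :
    (r A B ↔ r (A - B) {0}) ∧ (r A B ↔ r {0} (B - A)) := by
  have hr' : IsRegularEntailment
      (fun X Y : Finset G => r (Y.image (fun y : G => -y)) (X.image (fun y : G => -y))) :=
    RegEnt.dual hr
  have e0 : (({0} : Finset G)).image (fun y : G => -y) = {0} := by simp
  constructor
  · constructor
    · intro h
      have hd : r ((A.image (fun y : G => -y)).image (fun y : G => -y))
          ((B.image (fun y : G => -y)).image (fun y : G => -y)) := by
        rw [RegEnt.img_neg_neg, RegEnt.img_neg_neg]; exact h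
      have h2 := RegEnt.F1 hr' (hB.image _) (hA.image _) hd
      rw [RegEnt.L1, e0] at h2
      exact h2
    · intro h
      have h2 : r (((A.image (fun y : G => -y)) - (B.image (fun y : G => -y))).image
          (fun y : G => -y)) ((({0} : Finset G)).image (fun y : G => -y)) := by
        rw [RegEnt.L1, e0]; exact h
      have h3 := RegEnt.C1 hr' (hB.image _) (hA.image _) h2
      rw [RegEnt.img_neg_neg, RegEnt.img_neg_neg] at h3
      exact h3
  · exact ⟨RegEnt.F1 hr hA hB, RegEnt.C1 hr hA hB⟩
end

section
/- Let ⊢ be a regular entailment relation on a preordered commutative group G. If a₁ + a₂ + ... + aₙ = 0 in G, then {a₁, ..., aₙ} ⊢ {0}. -/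
open Finset Pointwise

theorem regular_entailment_list_sum_zero {G : Type*} [AddCommGroup G] [Preorder G]
    [CovariantClass G G (· + ·) (· ≤ ·)] [DecidableEq G]
    (r : Finset G → Finset G → Prop) (hr : IsRegularEntailment r) :
    ∀ (l : List G), l ≠ [] → l.sum = 0 → r l.toFinset {0}
  | [] => by simp
  | [x] => by
      intro _ h
      simp at h
      subst h
      simpa using hr.of_le (le_refl (0 : G))
  | x :: y :: t => by
      intro _ h
      have hsum : ((x + y) :: t).sum = 0 := by
        simp only [List.sum_cons] at h ⊢
        rw [← add_assoc] at h
        exact h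
      have ih := regular_entailment_list_sum_zero r hr ((x + y) :: t) (by simp) hsum
      set A := (x :: y :: t).toFinset with hA
      have h1 : r (insert (x + y) A) {0} := by
        refine hr.weaken ⟨x + y, by simp⟩ (Finset.singleton_nonempty 0) ?_
          Finset.Subset.rfl ih
        intro z hz
        simp only [List.toFinset_cons, Finset.mem_insert, List.mem_toFinset] at hz ⊢
        rcases hz with h | h
        · exact Or.inl h
        · simp [hA, h]
      have hreg : r {x, y} {x + y, 0} := by
        simpa using hr.regular x y 0 0
      have h2 : r A (insert (x + y) {0}) := by
        refine hr.weaken ⟨x, by simp⟩ ⟨x + y, by simp⟩ ?_ ?_ hreg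
        · intro z hz
          simp only [Finset.mem_insert, Finset.mem_singleton] at hz
          simp [hA]
          tauto
        · intro z hz
          simp only [Finset.mem_insert, Finset.mem_singleton] at hz ⊢
          exact hz
      exact hr.cut (x + y) ⟨x, by simp [hA]⟩ (Finset.singleton_nonempty 0) h1 h2

theorem regular_entailment_sum_zero {G : Type*} [AddCommGroup G] [Preorder G]
    [CovariantClass G G (· + ·) (· ≤ ·)] [DecidableEq G]
    (r : Finset G → Finset G → Prop) (hr : IsRegularEntailment r)
    (n : ℕ) (hn : 0 < n) (a : Fin n → G) (h : ∑ i, a i = 0) :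
    r (Finset.image a Finset.univ) {0} := by
  have hne : List.ofFn a ≠ [] := by
    simp [List.ofFn_eq_nil_iff, hn.ne']
  have hsum : (List.ofFn a).sum = 0 := by
    rw [List.sum_ofFn]; exact h
  have key := regular_entailment_list_sum_zero r hr (List.ofFn a) hne hsum
  have heq : (List.ofFn a).toFinset = Finset.image a Finset.univ := by
    ext z
    simp [List.mem_ofFn]
  rwa [heq] at key
end

section
/- Let ⊢ be a regular entailment relation on a preordered commutative group G. If a₁ + ... + aₙ = b₁ + ... + bₙ in G, then {a₁, ..., aₙ} ⊢ {b₁, ..., bₙ}. -/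
open Finset Pointwise

lemma IsRegularEntailment.pair {G : Type*} [AddCommGroup G] [Preorder G]
    [CovariantClass G G (· + ·) (· ≤ ·)] [DecidableEq G]
    {r : Finset G → Finset G → Prop} (hr : IsRegularEntailment r)
    (u v c : G) : r {u, v} {c, u + v - c} := by
  have h := hr.regular c 0 (u - c) v
  have e1 : c + (u - c) = u := by abel
  have e2 : (0 : G) + v = v := by abel
  have e3 : c + 0 = c := by abel
  have e4 : u - c + v = u + v - c := by abel
  rwa [e1, e2, e3, e4] at h

lemma regular_entailment_aux {G : Type*} [AddCommGroup G] [Preorder G]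
    [CovariantClass G G (· + ·) (· ≤ ·)] [DecidableEq G]
    (r : Finset G → Finset G → Prop) (hr : IsRegularEntailment r) :
    ∀ (n : ℕ) (a b : Fin (n + 1) → G), ∑ i, a i = ∑ i, b i →
      r (Finset.image a Finset.univ) (Finset.image b Finset.univ) := by
  intro n
  induction n with
  | zero =>
    intro a b h
    have h0 : a 0 = b 0 := by simpa using h
    have : (Finset.image a Finset.univ : Finset G) = {a 0} := by
      ext y; simp [Fin.fin_one_eq_zero, eq_comm]
    rw [this]
    have : (Finset.image b Finset.univ : Finset G) = {b 0} := by
      ext y; simp [Fin.fin_one_eq_zero, eq_comm]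
    rw [this]
    exact hr.of_le h0.le
  | succ n ih =>
    intro a b h
    set u : G := a ((Fin.last n).castSucc) with hu
    set v : G := a (Fin.last (n + 1)) with hv
    set c : G := b (Fin.last (n + 1)) with hc
    set x : G := u + v - c with hx
    -- the modified tuple
    set a' : Fin (n + 1) → G := Fin.snoc (fun i : Fin n => a i.castSucc.castSucc) x with ha'
    have hsum_a : ∑ i, a i = (∑ i : Fin n, a i.castSucc.castSucc) + u + v := by
      rw [Fin.sum_univ_castSucc, Fin.sum_univ_castSucc]
    have hsum_a' : ∑ i, a' i = (∑ i : Fin n, a i.castSucc.castSucc) + x := by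
      rw [Fin.sum_univ_castSucc]
      simp [ha']
    have hsum_b : ∑ i, b i = (∑ i : Fin (n+1), b i.castSucc) + c := by
      rw [Fin.sum_univ_castSucc]
    have hsum' : ∑ i, a' i = ∑ i : Fin (n+1), (Fin.init b) i := by
      have : ∑ i : Fin (n+1), (Fin.init b) i = ∑ i : Fin (n+1), b i.castSucc := by
        apply Finset.sum_congr rfl; intro i _; rfl
      rw [this, hsum_a', hx]
      have : (∑ i : Fin (n+1), b i.castSucc) = ∑ i, b i - c := by
        rw [hsum_b]; abel
      rw [this, ← h, hsum_a]
      abel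
    have h1 := ih a' (Fin.init b) hsum'
    apply hr.cut x
    · exact (Finset.univ_nonempty).image a
    · exact (Finset.univ_nonempty).image b
    · -- r (insert x (image a univ)) (image b univ)
      apply hr.weaken ((Finset.univ_nonempty).image a') ((Finset.univ_nonempty).image (Fin.init b)) _ _ h1
      · intro y hy
        simp only [Finset.mem_image, Finset.mem_univ, true_and] at hy
        obtain ⟨i, rfl⟩ := hy
        induction i using Fin.lastCases with
        | last =>
          have : a' (Fin.last n) = x := by simp [ha']
          rw [this]; exact Finset.mem_insert_self _ _
        | cast j =>
          have : a' j.castSucc = a j.castSucc.castSucc := by simp [ha']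
          rw [this]
          exact Finset.mem_insert_of_mem (Finset.mem_image_of_mem a (Finset.mem_univ _))
      · intro y hy
        simp only [Finset.mem_image, Finset.mem_univ, true_and] at hy
        obtain ⟨i, rfl⟩ := hy
        exact Finset.mem_image_of_mem b (Finset.mem_univ _)
    · -- r (image a univ) (insert x (image b univ))
      have h2 := hr.pair u v c
      rw [← hx] at h2
      apply hr.weaken (Finset.insert_nonempty _ _) (Finset.insert_nonempty _ _) _ _ h2
      · intro y hy
        rcases Finset.mem_insert.mp hy with rfl | hy
        · exact Finset.mem_image_of_mem a (Finset.mem_univ _)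
        · rcases Finset.mem_singleton.mp hy with rfl
          exact Finset.mem_image_of_mem a (Finset.mem_univ _)
      · intro y hy
        rcases Finset.mem_insert.mp hy with rfl | hy
        · exact Finset.mem_insert_of_mem (Finset.mem_image_of_mem b (Finset.mem_univ _))
        · rcases Finset.mem_singleton.mp hy with rfl
          exact Finset.mem_insert_self _ _

theorem regular_entailment_sum_eq {G : Type*} [AddCommGroup G] [Preorder G]
    [CovariantClass G G (· + ·) (· ≤ ·)] [DecidableEq G]
    (r : Finset G → Finset G → Prop) (hr : IsRegularEntailment r)
    (n : ℕ) (hn : 0 < n) (a b : Fin n → G) (h : ∑ i, a i = ∑ i, b i) :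
    r (Finset.image a Finset.univ) (Finset.image b Finset.univ) := by
  obtain ⟨m, rfl⟩ := Nat.exists_eq_succ_of_ne_zero hn.ne'
  exact regular_entailment_aux r hr m a b h
end

section
/- Let G be a preordered commutative group and R a predicate on nonempty finite subsets of G satisfying: (P1) R(A) if R(A') and A' ⊆ A; (P2) R(A + B) if R((A + B) ∪ A) and R((A + B) ∪ B) (cut); (P3) R({a}) if a ≤ 0; (P5) R({x, -x}) for all x. Then the relation A ⊢ B defined by R(A - B) is a regular entailment relation on G. -/
open Finset Pointwise

theorem regular_entailment_of_predicate {G : Type*} [AddCommGroup G] [Preorder G]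
    [CovariantClass G G (· + ·) (· ≤ ·)] [DecidableEq G]
    (R : Finset G → Prop)
    (P1 : ∀ A A' : Finset G, A'.Nonempty → A' ⊆ A → R A' → R A)
    (P2 : ∀ A B : Finset G, A.Nonempty → B.Nonempty →
      R ((A + B) ∪ A) → R ((A + B) ∪ B) → R (A + B))
    (P3 : ∀ a : G, a ≤ 0 → R {a})
    (P5 : ∀ x : G, R {x, -x}) :
    IsRegularEntailment (fun A B : Finset G => R (A - B)) := by
  constructor
  · intro A A' B B' hA' hB' hAs hBs h
    exact P1 _ _ (hA'.sub hB') (Finset.sub_subset_sub hAs hBs) h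
  · intro A B x hA hB h1 h2
    have key : A - B = ({x} - B) + (A - {x}) := by
      ext z
      simp only [Finset.mem_sub, Finset.mem_add, Finset.mem_singleton]
      constructor
      · rintro ⟨a, ha, b, hb, rfl⟩
        exact ⟨x - b, ⟨x, rfl, b, hb, rfl⟩, a - x, ⟨a, ha, x, rfl, rfl⟩, by abel⟩
      · rintro ⟨u, ⟨x', hx', b, hb, rfl⟩, v, ⟨a, ha, x'', hx'', rfl⟩, rfl⟩
        subst hx'; subst hx''
        exact ⟨a, ha, b, hb, by abel⟩
    rw [key]
    apply P2 _ _ (Finset.Nonempty.sub (Finset.singleton_nonempty x) hB) (Finset.Nonempty.sub hA (Finset.singleton_nonempty x))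
    · rw [← key]
      have : A - B ∪ ({x} - B) = insert x A - B := by
        rw [Finset.insert_eq, Finset.union_sub, Finset.union_comm]
      rw [this]; exact h1
    · rw [← key]
      have : A - B ∪ (A - {x}) = A - insert x B := by
        rw [Finset.insert_eq, Finset.sub_union, Finset.union_comm]
      rw [this]; exact h2
  · intro a b h
    have : ({a} : Finset G) - {b} = {a - b} := Finset.singleton_sub_singleton a b
    rw [this]
    exact P3 _ (sub_nonpos.2 h)
  · intro A B x h
    have : A.image (· + x) - B.image (· + x) = A - B := by
      ext z
      simp only [Finset.mem_sub, Finset.mem_image]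
      constructor
      · rintro ⟨u, ⟨a, ha, rfl⟩, v, ⟨b, hb, rfl⟩, rfl⟩
        exact ⟨a, ha, b, hb, by abel⟩
      · rintro ⟨a, ha, b, hb, rfl⟩
        exact ⟨a + x, ⟨a, ha, rfl⟩, b + x, ⟨b, hb, rfl⟩, by abel⟩
    rwa [this] at h
  · intro a b x y
    have hsub : ({x - b, b - x} : Finset G) ⊆ ({a + x, b + y} - {a + b, x + y}) := by
      intro z hz
      simp only [Finset.mem_insert, Finset.mem_singleton] at hz
      rcases hz with rfl | rfl
      · exact Finset.mem_sub.2 ⟨a + x, by simp, a + b, by simp, by abel⟩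
      · exact Finset.mem_sub.2 ⟨b + y, by simp, x + y, by simp, by abel⟩
    have := P5 (x - b)
    have hxb : ({x - b, -(x - b)} : Finset G) = {x - b, b - x} := by
      rw [neg_sub]
    rw [hxb] at this
    exact P1 _ _ ⟨x - b, by simp⟩ hsub this
end

section
/- Let ⊢ be a regular entailment relation on a preordered commutative group G, and define the predicate R(A) := (A ⊢ {0}). Then R satisfies: (P1) R(A) whenever R(A') and A' ⊆ A; (P2) R(A + B) whenever R((A + B) ∪ A) and R((A + B) ∪ B); (P3) R({a}) whenever a ≤ 0; (P5) R({x, -x}) for all x in G. -/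
open Finset Pointwise

namespace RegEntailmentAux

variable {G : Type*} [AddCommGroup G] [Preorder G]
    [CovariantClass G G (· + ·) (· ≤ ·)] [DecidableEq G]
    {r : Finset G → Finset G → Prop}

lemma shift (hr : IsRegularEntailment r) {X Y : Finset G} (t : G)
    (h : r X Y) : r (X.image (· + t)) (Y.image (· + t)) := by
  apply hr.translate (-t)
  have e : ∀ S : Finset G, (S.image (· + t)).image (· + -t) = S := by
    intro S
    rw [Finset.image_image]
    have : ((· + -t) ∘ (· + t)) = (id : G → G) := by
      funext x; simp
    rw [this, Finset.image_id]
  rw [e, e]; exact h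

lemma pure1 (hr : IsRegularEntailment r) (z z' d : G) :
    r {z, z'} {z + -d, z' + d} := by
  have h := hr.regular z (-d) 0 (z' + d)
  have e1 : z + 0 = z := add_zero z
  have e2 : -d + (z' + d) = z' := by abel
  have e3 : 0 + (z' + d) = z' + d := zero_add _
  rw [e1, e2, e3] at h
  exact h

/-- Key lemma: if `Z ∪ (Z - d) ⊢ {0}` then `Z ⊢ {d, 0}`. -/
lemma key (hr : IsRegularEntailment r) (Z : Finset G) (hZ : Z.Nonempty) (d : G)
    (h : r (Z ∪ Z.image (· + -d)) {0}) : r Z (insert d {0}) := by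
  -- translated hypothesis: (Z + d) ∪ Z ⊢ {d}
  have hd : r (Z.image (· + d) ∪ Z) {d} := by
    have := shift hr d h
    rw [Finset.image_union, Finset.image_image] at this
    have e : ((· + d) ∘ (· + -d)) = (id : G → G) := by funext x; simp
    rw [e, Finset.image_id] at this
    simpa using this
  -- the companion lemma
  have claimT : ∀ V : Finset G, V ⊆ Z → ∀ z ∈ Z,
      r (Z ∪ V.image (· + -d)) (insert (z + -d) (insert d {0})) := by
    intro V hV z hz
    set L := insert (z + d) (Z ∪ V.image (· + -d)) with hL
    set B := insert (z + -d) (insert d ({0} : Finset G)) with hB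
    have hZL : Z ⊆ L := fun u hu => by
      simp [hL, Finset.mem_insert, Finset.mem_union, hu]
    -- remove the elements of (Z+d) (except z+d kept in L) one at a time
    have claim2 : ∀ Y : Finset G, Y ⊆ Z →
        r (L ∪ Y.image (· + d)) B → r L B := by
      intro Y
      induction Y using Finset.induction_on with
      | empty => intro _ hcur; simpa using hcur
      | @insert z' Y₀ hz' IH =>
        intro hsub hcur
        have hz'Z : z' ∈ Z := hsub (Finset.mem_insert_self _ _)
        have hY₀ : Y₀ ⊆ Z := fun u hu => hsub (Finset.mem_insert_of_mem hu)
        apply IH hY₀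
        apply hr.cut (z' + d)
        · exact hZ.mono (hZL.trans Finset.subset_union_left)
        · exact Finset.insert_nonempty _ _
        · rw [Finset.image_insert, Finset.union_insert] at hcur
          exact hcur
        · -- companion: pure fact {z, z'} ⊢ {z + -d, z' + d}
          apply hr.weaken (Finset.insert_nonempty _ _) (Finset.insert_nonempty _ _)
            (A' := {z, z'}) (B' := {z + -d, z' + d})
          · intro u hu
            rcases Finset.mem_insert.mp hu with h1 | h1
            · subst h1; exact Finset.mem_union_left _ (hZL hz)
            · rw [Finset.mem_singleton] at h1; subst h1
              exact Finset.mem_union_left _ (hZL hz'Z)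
          · intro u hu
            rcases Finset.mem_insert.mp hu with h1 | h1
            · subst h1
              exact Finset.mem_insert_of_mem (Finset.mem_insert_self _ _)
            · rw [Finset.mem_singleton] at h1; subst h1
              exact Finset.mem_insert_self _ _
          · exact pure1 hr z z' d
    have base : r (L ∪ Z.image (· + d)) B := by
      apply hr.weaken (hZ.mono Finset.subset_union_right)
        (Finset.singleton_nonempty d)
        (A' := Z.image (· + d) ∪ Z) (B' := {d})
      · intro u hu
        rcases Finset.mem_union.mp hu with h1 | h1
        · exact Finset.mem_union_right _ h1
        · exact Finset.mem_union_left _ (hZL h1)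
      · intro u hu
        rw [Finset.mem_singleton] at hu; subst hu
        exact Finset.mem_insert_of_mem (Finset.mem_insert_self _ _)
      · exact hd
    have hLB : r L B := claim2 Z (Finset.Subset.refl _) base
    -- now cut (z + d)
    apply hr.cut (z + d)
    · exact hZ.mono Finset.subset_union_left
    · exact Finset.insert_nonempty _ _
    · exact hLB
    · apply hr.weaken (Finset.insert_nonempty _ _) (Finset.insert_nonempty _ _)
        (A' := {z, z}) (B' := {z + -d, z + d})
      · intro u hu
        rcases Finset.mem_insert.mp hu with h1 | h1
        · subst h1; exact Finset.mem_union_left _ hz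
        · rw [Finset.mem_singleton] at h1; subst h1
          exact Finset.mem_union_left _ hz
      · intro u hu
        rcases Finset.mem_insert.mp hu with h1 | h1
        · subst h1; exact Finset.mem_insert_of_mem (Finset.mem_insert_self _ _)
        · rw [Finset.mem_singleton] at h1; subst h1
          exact Finset.mem_insert_self _ _
      · exact pure1 hr z z d
  -- main downward induction removing the elements of Z - d
  have claim1 : ∀ V : Finset G, V ⊆ Z →
      r (Z ∪ V.image (· + -d)) (insert d {0}) → r Z (insert d {0}) := by
    intro V
    induction V using Finset.induction_on with
    | empty => intro _ hcur; simpa using hcur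
    | @insert z V₀ hzV IH =>
      intro hsub hcur
      have hzZ : z ∈ Z := hsub (Finset.mem_insert_self _ _)
      have hV₀ : V₀ ⊆ Z := fun u hu => hsub (Finset.mem_insert_of_mem hu)
      apply IH hV₀
      apply hr.cut (z + -d)
      · exact hZ.mono Finset.subset_union_left
      · exact Finset.insert_nonempty _ _
      · rw [Finset.image_insert, Finset.union_insert] at hcur
        exact hcur
      · exact claimT V₀ hV₀ z hzZ
  apply claim1 Z (Finset.Subset.refl _)
  apply hr.weaken (hZ.mono Finset.subset_union_left) (Finset.singleton_nonempty 0)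
    (Finset.Subset.refl _) (B' := {0})
  · intro u hu
    rw [Finset.mem_singleton] at hu; subst hu
    exact Finset.mem_insert_of_mem (Finset.mem_singleton_self 0)
  · exact h

end RegEntailmentAux

theorem predicate_of_regular_entailment {G : Type*} [AddCommGroup G] [Preorder G]
    [CovariantClass G G (· + ·) (· ≤ ·)] [DecidableEq G]
    (r : Finset G → Finset G → Prop) (hr : IsRegularEntailment r) :
    (∀ A A' : Finset G, A'.Nonempty → A' ⊆ A → r A' {0} → r A {0}) ∧
    (∀ A B : Finset G, A.Nonempty → B.Nonempty →
      r ((A + B) ∪ A) {0} → r ((A + B) ∪ B) {0} → r (A + B) {0}) ∧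
    (∀ a : G, a ≤ 0 → r {a} {0}) ∧
    (∀ x : G, r {x, -x} {0}) := by
  refine ⟨?_, ?_, ?_, ?_⟩
  · intro A A' hne hsub h
    exact hr.weaken hne (Finset.singleton_nonempty 0) hsub (Finset.Subset.refl _) h
  · intro A B hA hB h1 h2
    have hAB : (A + B).Nonempty := hA.add hB
    have claim3 : ∀ A' : Finset G, A' ⊆ A →
        r ((A + B) ∪ A') {0} → r (A + B) {0} := by
      intro A'
      induction A' using Finset.induction_on with
      | empty => intro _ hcur; simpa using hcur
      | @insert a A₀ ha IH =>
        intro hsub hcur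
        have haA : a ∈ A := hsub (Finset.mem_insert_self _ _)
        have hA₀ : A₀ ⊆ A := fun u hu => hsub (Finset.mem_insert_of_mem hu)
        apply IH hA₀
        apply hr.cut a
        · exact hAB.mono Finset.subset_union_left
        · exact Finset.singleton_nonempty _
        · rw [Finset.union_insert] at hcur
          exact hcur
        · -- companion from the key lemma
          apply RegEntailmentAux.key hr ((A + B) ∪ A₀)
            (hAB.mono Finset.subset_union_left) a
          apply hr.weaken (hAB.mono Finset.subset_union_left)
            (Finset.singleton_nonempty 0)
            (A' := (A + B) ∪ B) (B' := {0})
          · intro u hu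
            rcases Finset.mem_union.mp hu with h1' | h1'
            · exact Finset.mem_union_left _ (Finset.mem_union_left _ h1')
            · apply Finset.mem_union_right
              rw [Finset.mem_image]
              refine ⟨a + u, Finset.mem_union_left _ ?_, by abel⟩
              exact Finset.add_mem_add haA h1'
          · exact Finset.Subset.refl _
          · exact h2
    exact claim3 A (Finset.Subset.refl _) h1
  · intro a ha
    exact hr.of_le ha
  · intro x
    have h := hr.regular x (-x) 0 0
    have e1 : x + 0 = x := add_zero x
    have e2 : -x + 0 = -x := add_zero _
    have e3 : x + -x = 0 := by abel
    have e4 : (0 : G) + 0 = 0 := add_zero _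
    rw [e1, e2, e3, e4] at h
    simpa using h
end

section
/- Let S be an equivariant system of ideals on a preordered commutative group G, and let T_x(S) be the least equivariant system of ideals Q containing S such that Q({x}) holds (i.e., {x} ▷_Q 0). Then T_x(S)(A) holds if and only if there exists a natural number k ≥ 0 such that S(A ∪ (A - x) ∪ (A - 2x) ∪ ... ∪ (A - kx)). -/
open Finset Pointwise

/-- An equivariant system of ideals on a preordered commutative group,
presented as a predicate on (nonempty) finite subsets. -/
structure IsIdealSystem {G : Type*} [AddCommGroup G] [Preorder G]
    [CovariantClass G G (· + ·) (· ≤ ·)] [DecidableEq G]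
    (S : Finset G → Prop) : Prop where
  p1 : ∀ {A A' : Finset G}, A'.Nonempty → A' ⊆ A → S A' → S A
  p2' : ∀ {A : Finset G} (u : G), A.Nonempty →
    S (insert u A) → S (A.image (fun a => a - u)) → S A
  p3 : ∀ {a : G}, a ≤ 0 → S {a}

section Aux

variable {G : Type*} [AddCommGroup G] [Preorder G]
    [CovariantClass G G (· + ·) (· ≤ ·)] [DecidableEq G]

/-- The union `A ∪ (A - x) ∪ ⋯ ∪ (A - kx)`. -/
def fcC (x : G) (k : ℕ) (A : Finset G) : Finset G :=
  (Finset.range (k + 1)).biUnion (fun j => A.image (fun a => a - j • x))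

lemma mem_fcC {x : G} {k : ℕ} {A : Finset G} {c : G} :
    c ∈ fcC x k A ↔ ∃ j ≤ k, ∃ b ∈ A, b - j • x = c := by
  simp [fcC, Nat.lt_succ_iff]

lemma fcC_mono_k {x : G} {k k' : ℕ} (h : k ≤ k') (A : Finset G) :
    fcC x k A ⊆ fcC x k' A := by
  intro c hc
  rw [mem_fcC] at hc ⊢
  obtain ⟨j, hj, b, hb, rfl⟩ := hc
  exact ⟨j, hj.trans h, b, hb, rfl⟩

lemma fcC_mono_A {x : G} {k : ℕ} {A B : Finset G} (h : A ⊆ B) :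
    fcC x k A ⊆ fcC x k B := by
  intro c hc
  rw [mem_fcC] at hc ⊢
  obtain ⟨j, hj, b, hb, rfl⟩ := hc
  exact ⟨j, hj, b, h hb, rfl⟩

lemma fcC_nonempty {x : G} {k : ℕ} {A : Finset G} (h : A.Nonempty) :
    (fcC x k A).Nonempty := by
  obtain ⟨a, ha⟩ := h
  exact ⟨a - (0 : ℕ) • x, mem_fcC.2 ⟨0, Nat.zero_le _, a, ha, rfl⟩⟩

lemma fcC_zero {x : G} {A : Finset G} : fcC x 0 A = A := by
  ext c
  simp [mem_fcC]

lemma mem_fcC_self {x : G} {k : ℕ} {A : Finset G} {a : G} (h : a ∈ A) :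
    a ∈ fcC x k A := by
  refine mem_fcC.2 ⟨0, Nat.zero_le _, a, h, by simp⟩

/-- Removing a shifted element: if `a ∈ B` and `T (insert (a - x) B)` and `T {x}`,
then `T B`. -/
lemma fc_remove_shift {T : Finset G → Prop} (hT : IsIdealSystem T) {x : G}
    (hTx : T {x}) {B : Finset G} {a : G} (haB : a ∈ B)
    (h : T (insert (a - x) B)) : T B := by
  apply hT.p2' (a - x) ⟨a, haB⟩ h
  refine hT.p1 (singleton_nonempty x) ?_ hTx
  rw [singleton_subset_iff, mem_image]
  exact ⟨a, haB, by abel⟩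

lemma fc_remove_all {T : Finset G → Prop} (hT : IsIdealSystem T) {x : G}
    (hTx : T {x}) {A : Finset G} (F : Finset G) (hF : F ⊆ A) :
    T (A ∪ F.image (fun a => a - x)) → T A := by
  induction F using Finset.induction with
  | empty => simpa using id
  | @insert a F' haF' ih =>
    intro h
    rw [image_insert, union_insert] at h
    exact ih ((subset_insert a F').trans hF)
      (fc_remove_shift hT hTx (mem_union_left _ (hF (mem_insert_self a F'))) h)

lemma fcC_succ {x : G} {k : ℕ} {A : Finset G} :
    fcC x (k + 1) A = fcC x k (A ∪ A.image (fun a => a - x)) := by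
  ext c
  rw [mem_fcC, mem_fcC]
  constructor
  · rintro ⟨j, hj, b, hb, rfl⟩
    cases j with
    | zero => exact ⟨0, Nat.zero_le _, b, mem_union_left _ hb, rfl⟩
    | succ i =>
      refine ⟨i, Nat.lt_succ_iff.1 hj, b - x, mem_union_right _ (mem_image.2 ⟨b, hb, rfl⟩), ?_⟩
      rw [succ_nsmul]; abel
  · rintro ⟨j, hj, b, hb, rfl⟩
    rcases mem_union.1 hb with hb | hb
    · exact ⟨j, hj.trans (Nat.le_succ k), b, hb, rfl⟩
    · obtain ⟨a, ha, rfl⟩ := mem_image.1 hb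
      refine ⟨j + 1, Nat.succ_le_succ hj, a, ha, ?_⟩
      rw [succ_nsmul]; abel

lemma fc_down {S T : Finset G → Prop} (hT : IsIdealSystem T) {x : G}
    (hST : ∀ A : Finset G, A.Nonempty → S A → T A) (hTx : T {x}) :
    ∀ (k : ℕ) (A : Finset G), A.Nonempty → S (fcC x k A) → T A := by
  intro k
  induction k with
  | zero => intro A hA h; rw [fcC_zero] at h; exact hST A hA h
  | succ n ih =>
    intro A hA h
    rw [fcC_succ] at h
    have hT' : T (A ∪ A.image (fun a => a - x)) :=
      ih _ (hA.mono subset_union_left) h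
    exact fc_remove_all hT hTx A (subset_refl A) hT'

/-- Key lemma establishing (P'2) for the forcing system. -/
lemma fc_p2 {S : Finset G → Prop} (hS : IsIdealSystem S) (x u : G)
    {A : Finset G} (hA : A.Nonempty) {k1 k2 : ℕ}
    (h1 : S (fcC x k1 (insert u A)))
    (h2 : S (fcC x k2 (A.image (fun a => a - u)))) :
    S (fcC x (k1 + k2) A) := by
  set K := k1 + k2 with hK
  set R : ℕ → Finset G := fun j => (Finset.range j).image (fun i => u - i • x) with hR
  -- base : S (fcC x K A ∪ R (k1+1))
  have base : S (fcC x K A ∪ R (k1 + 1)) := by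
    refine hS.p1 (fcC_nonempty ⟨u, mem_insert_self _ _⟩) ?_ h1
    intro c hc
    rw [mem_fcC] at hc
    obtain ⟨j, hj, b, hb, rfl⟩ := hc
    rcases mem_insert.1 hb with rfl | hbA
    · exact mem_union_right _ (mem_image.2 ⟨j, mem_range.2 (Nat.lt_succ_of_le hj), rfl⟩)
    · exact mem_union_left _ (mem_fcC.2 ⟨j, hj.trans (Nat.le_add_right _ _), b, hbA, rfl⟩)
  -- removal induction
  have hrec : ∀ j : ℕ, j ≤ k1 + 1 → S (fcC x K A ∪ R j) → S (fcC x K A ∪ R 0) := by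
    intro j
    induction j with
    | zero => exact fun _ h => h
    | succ n ih =>
      intro hn h
      have hn' : n ≤ k1 := Nat.lt_succ_iff.1 hn
      apply ih (Nat.le_of_succ_le hn)
      -- show S (fcC x K A ∪ R n) using p2' with element u - n • x
      apply hS.p2' (u - n • x)
        ((fcC_nonempty hA).mono (subset_union_left))
      · -- S (insert (u - n•x) (fcC x K A ∪ R n))
        refine hS.p1 ((fcC_nonempty hA).mono subset_union_left) ?_ h
        intro c hc
        rcases mem_union.1 hc with hc | hc
        · exact mem_insert_of_mem (mem_union_left _ hc)
        · rw [hR, mem_image] at hc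
          obtain ⟨i, hi, rfl⟩ := hc
          rw [mem_range, Nat.lt_succ_iff_lt_or_eq] at hi
          rcases hi with hi | rfl
          · exact mem_insert_of_mem (mem_union_right _ (mem_image.2 ⟨i, mem_range.2 hi, rfl⟩))
          · exact mem_insert_self _ _
      · -- S ((fcC x K A ∪ R n).image (· - (u - n•x)))
        refine hS.p1 (fcC_nonempty (hA.image _)) ?_ h2
        intro c hc
        rw [mem_fcC] at hc
        obtain ⟨i, hi, b, hb, rfl⟩ := hc
        rw [mem_image] at hb
        obtain ⟨a, ha, rfl⟩ := hb
        rw [mem_image]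
        refine ⟨a - (n + i) • x, mem_union_left _
          (mem_fcC.2 ⟨n + i, by omega, a, ha, rfl⟩), ?_⟩
        rw [add_nsmul]
        abel
  have final := hrec (k1 + 1) le_rfl base
  have : fcC x K A ∪ R 0 = fcC x K A := by
    simp [hR]
  rwa [this] at final

end Aux

theorem forcing_ideal_system_characterization {G : Type*} [AddCommGroup G] [Preorder G]
    [CovariantClass G G (· + ·) (· ≤ ·)] [DecidableEq G]
    (S : Finset G → Prop) (hS : IsIdealSystem S) (x : G)
    (T : Finset G → Prop) (hT : IsIdealSystem T)
    (hST : ∀ A : Finset G, A.Nonempty → S A → T A)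
    (hTx : T {x})
    (hleast : ∀ Q : Finset G → Prop, IsIdealSystem Q →
      (∀ A : Finset G, A.Nonempty → S A → Q A) → Q {x} →
      ∀ A : Finset G, A.Nonempty → T A → Q A) :
    ∀ A : Finset G, A.Nonempty →
      (T A ↔ ∃ k : ℕ,
        S ((Finset.range (k + 1)).biUnion (fun j => A.image (fun a => a - j • x)))) := by
  set Q : Finset G → Prop := fun A => ∃ k : ℕ, S (fcC x k A) with hQ
  have hQsys : IsIdealSystem Q := by
    constructor
    · rintro A A' hA' hsub ⟨k, h⟩
      exact ⟨k, hS.p1 (fcC_nonempty hA') (fcC_mono_A hsub) h⟩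
    · rintro A u hA ⟨k1, h1⟩ ⟨k2, h2⟩
      exact ⟨k1 + k2, fc_p2 hS x u hA h1 h2⟩
    · intro a ha
      exact ⟨0, by rw [fcC_zero]; exact hS.p3 ha⟩
  have hSQ : ∀ A : Finset G, A.Nonempty → S A → Q A := by
    intro A _ h
    exact ⟨0, by rwa [fcC_zero]⟩
  have hQx : Q {x} := by
    refine ⟨1, hS.p1 ⟨0, mem_singleton_self 0⟩ ?_ (hS.p3 le_rfl)⟩
    intro c hc
    rw [mem_singleton] at hc
    subst hc
    refine mem_fcC.2 ⟨1, le_rfl, x, mem_singleton_self x, by simp⟩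
  intro A hA
  constructor
  · intro hTA
    exact hleast Q hQsys hSQ hQx A hA hTA
  · rintro ⟨k, h⟩
    exact fc_down hT hST hTx k A hA h
end

section
/- Let G be a commutative preordered group and let L(S_M) be the regularisation of the least equivariant system of ideals S_M (where S_M(A) iff A contains an element a with a ≤ 0). If L(S_M)({a}) holds, then there exists n > 0 such that n·a ≤ 0 in G. -/
open Finset Pointwise

private lemma nsmul_nonpos' {G : Type*} [AddCommGroup G] [Preorder G]
    [CovariantClass G G (· + ·) (· ≤ ·)] (c : ℕ) {u : G} (hu : u ≤ 0) : c • u ≤ 0 := by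
  induction c with
  | zero => simp
  | succ n ih =>
      rw [succ_nsmul]
      calc n • u + u ≤ 0 + 0 := add_le_add ih hu
      _ = 0 := by simp

private lemma lorenzen_aux {G : Type*} [AddCommGroup G] [Preorder G]
    [CovariantClass G G (· + ·) (· ≤ ·)] :
    ∀ (n : ℕ) (a : G) (xs : Fin n → G),
      (∀ ε : Fin n → Bool, ∃ (m : ℕ) (k : Fin n → ℕ), 0 < m ∧
        m • a + ∑ i, (k i) • (if ε i then xs i else -(xs i)) ≤ 0) →
      ∃ m : ℕ, 0 < m ∧ m • a ≤ 0 := by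
  intro n
  induction n with
  | zero =>
      intro a xs H
      obtain ⟨m, k, hm, hle⟩ := H (fun i => i.elim0)
      refine ⟨m, hm, ?_⟩
      simpa using hle
  | succ n ih =>
      intro a xs H
      apply ih a (fun i => xs i.succ)
      intro ε
      obtain ⟨m₁, k₁, hm₁, h₁⟩ := H (Fin.cons true ε)
      obtain ⟨m₂, k₂, hm₂, h₂⟩ := H (Fin.cons false ε)
      rw [Fin.sum_univ_succ] at h₁ h₂
      simp only [Fin.cons_succ, Fin.cons_zero, if_true, Bool.false_eq_true, if_false] at h₁ h₂
      rcases Nat.eq_zero_or_pos (k₁ 0) with hk1 | hk1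
      · refine ⟨m₁, fun i => k₁ i.succ, hm₁, ?_⟩
        simpa [hk1] using h₁
      rcases Nat.eq_zero_or_pos (k₂ 0) with hk2 | hk2
      · refine ⟨m₂, fun i => k₂ i.succ, hm₂, ?_⟩
        simpa [hk2] using h₂
      refine ⟨k₂ 0 * m₁ + k₁ 0 * m₂, fun i => k₂ 0 * k₁ i.succ + k₁ 0 * k₂ i.succ, ?_, ?_⟩
      · positivity
      have key := add_le_add (nsmul_nonpos' (k₂ 0) h₁) (nsmul_nonpos' (k₁ 0) h₂)
      rw [add_zero] at key
      calc (k₂ 0 * m₁ + k₁ 0 * m₂) • a +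
            ∑ i, (k₂ 0 * k₁ i.succ + k₁ 0 * k₂ i.succ) •
              (if ε i then xs i.succ else -(xs i.succ))
          = k₂ 0 • (m₁ • a + (k₁ 0 • xs 0 +
              ∑ i, (k₁ i.succ) • (if ε i then xs i.succ else -(xs i.succ)))) +
            k₁ 0 • (m₂ • a + (k₂ 0 • (-(xs 0)) +
              ∑ i, (k₂ i.succ) • (if ε i then xs i.succ else -(xs i.succ)))) := by
            simp only [smul_add, Finset.smul_sum, mul_smul, add_smul, smul_neg,
              Finset.sum_add_distrib, smul_comm (k₂ 0) (k₁ 0)]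
            abel
      _ ≤ 0 := key

theorem lorenzen_regularisation_singleton {G : Type*} [AddCommGroup G] [Preorder G]
    [CovariantClass G G (· + ·) (· ≤ ·)] (a : G)
    (h : ∃ (n : ℕ) (xs : Fin n → G), ∀ ε : Fin n → Bool,
      ∃ k : Fin n → ℕ, a + ∑ i, (k i) • (if ε i then xs i else -(xs i)) ≤ 0) :
    ∃ m : ℕ, 0 < m ∧ m • a ≤ 0 := by
  obtain ⟨n, xs, hn⟩ := h
  apply lorenzen_aux n a xs
  intro ε
  obtain ⟨k, hk⟩ := hn ε
  exact ⟨1, k, one_pos, by simpa using hk⟩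
end

section
/- Let S be an equivariant system of ideals on a preordered commutative group G, with associated preorder A ≤_S B on nonempty finite subsets defined by A ▷ b for all b in B. Define R(A) to hold iff there exists a nonempty finite subset B with A + B ≤_S B. Then R is the regularisation of S: R is the least regular equivariant system of ideals containing S (Prüfer's characterization). -/
open Finset Pointwise

/-- An equivariant system of ideals on a preordered commutative group:
a relation `A ▷ x` between nonempty finite subsets and elements satisfying
weakening, cut, `{a} ▷ x` when `a ≤ x`, and translation invariance. -/
structure IsEquivariantIdeal {G : Type*} [AddCommGroup G] [Preorder G]
    [CovariantClass G G (· + ·) (· ≤ ·)] [DecidableEq G]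
    (rhd : Finset G → G → Prop) : Prop where
  s1 : ∀ {A A' : Finset G} {x : G}, A'.Nonempty → A' ⊆ A → rhd A' x → rhd A x
  s2 : ∀ {A : Finset G} {x y : G}, A.Nonempty → rhd (insert y A) x → rhd A y → rhd A x
  s3 : ∀ {a x : G}, a ≤ x → rhd {a} x
  s4 : ∀ {A : Finset G} {x : G} (y : G), rhd A x ↔ rhd (A.image (· + y)) (x + y)

/-- Regularity for the predicate `S A = A ▷ 0` of an equivariant system of ideals. -/
def IsRegularPred {G : Type*} [AddCommGroup G] [DecidableEq G]
    (S : Finset G → Prop) : Prop :=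
  (∀ A B : Finset G, A.Nonempty → B.Nonempty →
    S ((A + B) ∪ A) → S ((A + B) ∪ B) → S (A + B)) ∧
  (∀ x : G, S {x, -x})

section helpers
variable {G : Type*} [AddCommGroup G] [Preorder G]
    [CovariantClass G G (· + ·) (· ≤ ·)] [DecidableEq G]
    {rhd : Finset G → G → Prop} (h : IsEquivariantIdeal rhd)

include h

lemma eqi_mem {A : Finset G} {a : G} (ha : a ∈ A) : rhd A a :=
  h.s1 ⟨a, mem_singleton_self a⟩ (singleton_subset_iff.2 ha) (h.s3 le_rfl)

lemma eqi_tr {A : Finset G} {t : G} (g : G) (ht : rhd A t) : rhd (A + {g}) (t + g) := by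
  rw [Finset.add_singleton]; exact (h.s4 g).1 ht

lemma eqi_tr' {A : Finset G} {t : G} (g : G) (ht : rhd (A + {g}) (t + g)) : rhd A t := by
  rw [Finset.add_singleton] at ht; exact (h.s4 g).2 ht

lemma eqi_cut {X : Finset G} (hX : X.Nonempty) (Y : Finset G) :
    ∀ {t : G}, rhd (X ∪ Y) t → (∀ y ∈ Y, rhd X y) → rhd X t := by
  induction Y using Finset.induction_on with
  | empty => intro t h1 _; simpa using h1
  | @insert y Y' hy0 ih =>
    intro t h1 h2
    rw [Finset.union_insert] at h1
    have hy : rhd (X ∪ Y') y := h.s1 hX subset_union_left (h2 y (mem_insert_self y Y'))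
    have h3 := h.s2 (hX.mono subset_union_left) h1 hy
    exact ih h3 (fun z hz => h2 z (mem_insert_of_mem hz))

lemma eqi_cut' {X Y : Finset G} {t : G} (hX : X.Nonempty)
    (h4 : rhd (X ∪ Y) t) (hb : ∀ y ∈ Y, rhd X y) : rhd X t :=
  eqi_cut h hX Y h4 hb

/-- `leS X Y` : every element of `Y` is generated by `X`. -/
abbrev leS (rhd : Finset G → G → Prop) (X Y : Finset G) : Prop := ∀ y ∈ Y, rhd X y

lemma eqi_memb {X Y : Finset G} (hXY : Y ⊆ X) : leS rhd X Y :=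
  fun y hy => eqi_mem h (hXY hy)

lemma eqi_trans {X Y Z : Finset G} (hX : X.Nonempty) (hY : Y.Nonempty)
    (h1 : leS rhd X Y) (h2 : leS rhd Y Z) : leS rhd X Z := by
  intro z hz
  exact eqi_cut h hX Y (h.s1 hY subset_union_right (h2 z hz)) h1

lemma eqi_weak {X X' Y : Finset G} (hX : X.Nonempty) (hXX : X ⊆ X')
    (h1 : leS rhd X Y) : leS rhd X' Y :=
  fun y hy => h.s1 hX hXX (h1 y hy)

lemma eqi_addRight {X Y : Finset G} (hX : X.Nonempty) (Z : Finset G)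
    (h1 : leS rhd X Y) : leS rhd (X + Z) (Y + Z) := by
  intro s hs
  rw [Finset.mem_add] at hs
  obtain ⟨y, hy, z, hz, rfl⟩ := hs
  exact h.s1 (hX.add ⟨z, Finset.mem_singleton_self z⟩)
    (Finset.add_subset_add_left (singleton_subset_iff.2 hz)) (eqi_tr h z (h1 y hy))

omit h in
lemma eqi_union {X Y Z : Finset G} (h1 : leS rhd X Y) (h2 : leS rhd X Z) :
    leS rhd X (Y ∪ Z) := by
  intro s hs
  rcases Finset.mem_union.1 hs with hs | hs
  exacts [h1 s hs, h2 s hs]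

end helpers

section more
variable {G : Type*} [AddCommGroup G] [Preorder G]
    [CovariantClass G G (· + ·) (· ≤ ·)] [DecidableEq G]
    {rhd : Finset G → G → Prop} (h : IsEquivariantIdeal rhd)

omit [Preorder G] [CovariantClass G G (· + ·) (· ≤ ·)] in
lemma imgAdd (A : Finset G) (g : G) : A.image (· + g) = A + {g} := by
  ext b
  simp only [Finset.mem_image, Finset.mem_add, Finset.mem_singleton]
  constructor
  · rintro ⟨a, ha, rfl⟩; exact ⟨a, ha, g, rfl, rfl⟩
  · rintro ⟨a, ha, z, rfl, rfl⟩; exact ⟨a, ha, rfl⟩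

omit [Preorder G] [CovariantClass G G (· + ·) (· ≤ ·)] in
lemma imgSub (A : Finset G) (x : G) : A.image (fun a => a - x) = A + {-x} := by
  have e : (fun a : G => a - x) = (· + (-x)) := funext fun a => sub_eq_add_neg a x
  rw [e, imgAdd]

omit [Preorder G] [CovariantClass G G (· + ·) (· ≤ ·)] in
lemma addZero (A : Finset G) : A + ({0} : Finset G) = A := by
  rw [Finset.add_singleton]; simp

include h

/-- Core cut lemma for the regularisation. -/
lemma R_cut {A₀ : Finset G} {y₀ : G} (hA : A₀.Nonempty)
    {B C : Finset G} (hB : B.Nonempty) (hC : C.Nonempty)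
    (h1 : leS rhd (({y₀} ∪ A₀) + B) B)
    (h2 : leS rhd (A₀ + {-y₀} + C) C) :
    leS rhd (A₀ + (B + C)) (B + C) := by
  have hX : (A₀ + B + C).Nonempty := ((hA.add hB).add hC)
  -- (a)
  have ha : leS rhd (({y₀} + B + C) ∪ (A₀ + B + C)) (B + C) := by
    have h3 := eqi_addRight h ((Finset.singleton_nonempty y₀).add hB |>.mono
      (Finset.add_subset_add_right subset_union_left)) C h1
    rwa [Finset.union_add, Finset.union_add] at h3
  -- (b)
  have hb : leS rhd (A₀ + B + C) ({y₀} + B + C) := by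
    have h3 := eqi_addRight h ((hA.add (Finset.singleton_nonempty (-y₀))).add hC) ({y₀} + B) h2
    have e1 : A₀ + {-y₀} + C + ({y₀} + B) = A₀ + B + C := by
      have e0 : A₀ + {-y₀} + C + ({y₀} + B) = A₀ + C + B + ({-y₀} + {y₀}) := by abel
      rw [e0, Finset.singleton_add_singleton]
      simp only [neg_add_cancel, addZero]
      abel
    have e2 : C + ({y₀} + B) = {y₀} + B + C := by abel
    rwa [e1, e2] at h3
  intro t ht
  have h4 : rhd ((A₀ + B + C) ∪ ({y₀} + B + C)) t := by
    rw [Finset.union_comm]; exact ha t ht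
  have h5 : rhd (A₀ + B + C) t := eqi_cut' h hX h4 hb
  rwa [add_assoc] at h5

/-- Regularity axiom 1 for the regularisation. -/
lemma R_reg1 {A B C D : Finset G} (hA : A.Nonempty) (hB : B.Nonempty)
    (hC : C.Nonempty) (hD : D.Nonempty)
    (hCle : leS rhd (((A + B) ∪ A) + C) C)
    (hDle : leS rhd (((A + B) ∪ B) + D) D) :
    leS rhd ((A + B) + ((C + D) ∪ (A + (C + D)))) ((C + D) ∪ (A + (C + D))) := by
  have hEne : (C + D).Nonempty := hC.add hD
  have hUne : (A + B).Nonempty := hA.add hB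
  have le1 : leS rhd (((A + B) + (C + D)) ∪ (A + (C + D))) (C + D) := by
    have h3 := eqi_addRight h ((hUne.mono subset_union_left).add hC) D hCle
    have e1 : ((A + B) + C) + D = (A + B) + (C + D) := by abel
    have e2 : (A + C) + D = A + (C + D) := by abel
    rwa [Finset.union_add, Finset.union_add, e1, e2] at h3
  have le2 : leS rhd (((A + B) + (C + D)) ∪ (B + (C + D))) (C + D) := by
    have h3 := eqi_addRight h ((hUne.mono subset_union_left).add hD) C hDle
    have e1 : ((A + B) + D) + C = (A + B) + (C + D) := by abel
    have e2 : (B + D) + C = B + (C + D) := by abel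
    have e3 : D + C = C + D := by abel
    rwa [Finset.union_add, Finset.union_add, e1, e2, e3] at h3
  have le3 : leS rhd (((A + B) + (A + (C + D))) ∪ ((A + B) + (C + D))) (A + (C + D)) := by
    have h3 := eqi_addRight h ((hUne.add hEne).mono subset_union_left) A le2
    have e1 : ((A + B) + (C + D)) + A = (A + B) + (A + (C + D)) := by abel
    have e2 : (B + (C + D)) + A = (A + B) + (C + D) := by abel
    have e3 : (C + D) + A = A + (C + D) := by abel
    rwa [Finset.union_add, e1, e2, e3] at h3
  have hKne : (((A + B) + (C + D)) ∪ ((A + B) + (A + (C + D)))).Nonempty :=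
    (hUne.add hEne).mono subset_union_left
  have KleE : leS rhd (((A + B) + (C + D)) ∪ ((A + B) + (A + (C + D)))) (C + D) := by
    refine eqi_trans h hKne (Finset.Nonempty.mono subset_union_left (hUne.add hEne)) ?_ le1
    refine eqi_union ?_ ?_
    · exact eqi_memb h subset_union_left
    · intro t ht
      rw [Finset.union_comm]
      exact le3 t ht
  have KleAE : leS rhd (((A + B) + (C + D)) ∪ ((A + B) + (A + (C + D)))) (A + (C + D)) := by
    intro t ht
    rw [Finset.union_comm]
    exact le3 t ht
  have egoal : (A + B) + ((C + D) ∪ (A + (C + D)))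
      = ((A + B) + (C + D)) ∪ ((A + B) + (A + (C + D))) := Finset.add_union ..
  rw [egoal]
  exact eqi_union KleE KleAE
omit h [Preorder G] [CovariantClass G G (· + ·) (· ≤ ·)] in
lemma img_sub_zero (X : Finset G) : X.image (fun a => a - (0:G)) = X := by
  simp

omit h [Preorder G] [CovariantClass G G (· + ·) (· ≤ ·)] in
lemma cancelPair (X : Finset G) (g : G) : X + {g} + {-g} = X := by
  rw [add_assoc, Finset.singleton_add_singleton]
  simp only [add_neg_cancel]
  exact addZero X

omit h [Preorder G] [CovariantClass G G (· + ·) (· ≤ ·)] in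
lemma subset_add_of_zero_mem {X D : Finset G} (h0 : (0:G) ∈ D) : X ⊆ X + D := by
  intro x hx
  rw [Finset.mem_add]
  exact ⟨x, hx, 0, h0, add_zero x⟩

section part4
omit h
variable {R' : Finset G → Prop}
    (hT : IsEquivariantIdeal (fun (A : Finset G) (x : G) => R' (A.image (fun a => a - x))))
    (hReg : (∀ A B : Finset G, A.Nonempty → B.Nonempty →
        R' ((A + B) ∪ A) → R' ((A + B) ∪ B) → R' (A + B)) ∧ (∀ x : G, R' {x, -x}))

include hT

lemma monoP {X Y : Finset G} (hX : X.Nonempty) (hXY : X ⊆ Y) (hR : R' X) : R' Y := by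
  have h1 : R' (X.image (fun a => a - (0:G))) := by rw [img_sub_zero]; exact hR
  have h2 : R' (Y.image (fun a => a - (0:G))) := hT.s1 hX hXY h1
  rwa [img_sub_zero] at h2

lemma wrapT_s1 {X Y : Finset G} (hX : X.Nonempty) (hXY : X ⊆ Y) {d : G}
    (hR : R' (X.image (fun a => a - d))) : R' (Y.image (fun a => a - d)) :=
  hT.s1 hX hXY hR

lemma wrapT_s4 {X : Finset G} {x : G} (y : G)
    (hR : R' (X.image (fun a => a - x))) :
    R' ((X.image (· + y)).image (fun a => a - (x + y))) :=
  (hT.s4 y).1 hR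

include hReg

lemma DLem {A : Finset G} (hA : A.Nonempty) (e : G)
    (r1 : R' (A ∪ (A + {e}))) (r2 : R' (A ∪ {-e})) : R' A := by
  have ec : A + {e} + {-e} = A := cancelPair A e
  have p1 : R' (((A + {e}) + {-e}) ∪ (A + {e})) := by
    rw [ec]; exact r1
  have p2 : R' (((A + {e}) + {-e}) ∪ {-e}) := by rw [ec]; exact r2
  have h3 := hReg.1 (A + {e}) {-e} (hA.add (Finset.singleton_nonempty e))
    (Finset.singleton_nonempty (-e)) p1 p2
  rwa [ec] at h3

lemma D2Lem {A : Finset G} (hA : A.Nonempty) (e : G)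
    (r1 : R' (A ∪ (A + {e}))) (r2 : R' (A ∪ (A + {-e}))) : R' A := by
  have hA' : (A ∪ {-e}).Nonempty := hA.mono subset_union_left
  have rA' : R' (A ∪ {-e}) := by
    refine DLem hT hReg hA' (-e) ?_ ?_
    · refine monoP hT (hA.mono subset_union_left) ?_ r2
      refine Finset.union_subset (subset_union_left.trans subset_union_left) ?_
      exact (Finset.add_subset_add_right subset_union_left).trans subset_union_right
    · refine monoP hT ⟨e, Finset.mem_insert_self e {-e}⟩ ?_ (hReg.2 e)
      intro z hz
      simp only [Finset.mem_insert, Finset.mem_singleton, Finset.mem_union] at hz ⊢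
      rcases hz with rfl | rfl
      · right; rw [neg_neg]
      · left; right; rfl
  exact DLem hT hReg hA e r1 rA'

set_option maxHeartbeats 2000000 in
lemma P4ind : ∀ n : ℕ, ∀ D : Finset G, D.card ≤ n → (0:G) ∈ D →
    ∀ A : Finset G, A.Nonempty → (∀ d ∈ D, R' ((A + D).image (fun a => a - d))) → R' A := by
  intro n
  induction n with
  | zero =>
    intro D hcard h0D A hA _
    exact absurd (Finset.card_eq_zero.1 (Nat.le_zero.1 hcard) ▸ h0D) (Finset.notMem_empty 0)
  | succ n ih =>
    intro D hcard h0D A hA hyp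
    by_cases hall : ∀ d ∈ D, d = (0:G)
    · have hD : D = {0} := Finset.eq_singleton_iff_unique_mem.2 ⟨h0D, hall⟩
      have h1 := hyp 0 h0D
      rw [hD, addZero, img_sub_zero] at h1
      exact h1
    · push_neg at hall
      obtain ⟨e, heD, he0⟩ := hall
      have hADne : (A + D).Nonempty := hA.add ⟨0, h0D⟩
      -- Branch 1
      have hA1 : R' (A ∪ (A + {e})) := by
        have h0D' : (0:G) ∈ D.erase e := Finset.mem_erase.2 ⟨fun hh => he0 hh.symm, h0D⟩
        have hcard' : (D.erase e).card ≤ n := by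
          rw [Finset.card_erase_of_mem heD]; omega
        refine ih (D.erase e) hcard' h0D' (A ∪ (A + {e})) (hA.mono subset_union_left) ?_
        intro d hd
        have hsub : A + D ⊆ (A ∪ (A + {e})) + D.erase e := by
          nth_rewrite 1 [← Finset.insert_erase heD]
          rw [Finset.insert_eq, Finset.add_union, Finset.union_add]
          refine Finset.union_subset ?_ ?_
          · exact (subset_add_of_zero_mem h0D').trans subset_union_right
          · exact subset_union_left
        exact wrapT_s1 hT hADne hsub (hyp d (Finset.mem_of_mem_erase hd))
      -- Branch 2
      have hA2 : R' (A ∪ (A + {-e})) := by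
        have h0D2 : (0:G) ∈ D.image (· + (-e)) :=
          Finset.mem_image.2 ⟨e, heD, add_neg_cancel e⟩
        have hneD2 : (-e : G) ∈ D.image (· + (-e)) :=
          Finset.mem_image.2 ⟨0, h0D, zero_add (-e)⟩
        have h0D2' : (0:G) ∈ (D.image (· + (-e))).erase (-e) :=
          Finset.mem_erase.2 ⟨fun hh => he0 (by rw [← neg_neg e, ← hh, neg_zero]), h0D2⟩
        have hcard2 : ((D.image (· + (-e))).erase (-e)).card ≤ n := by
          rw [Finset.card_erase_of_mem hneD2]
          have hle := Finset.card_image_le (s := D) (f := (· + (-e)))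
          omega
        have hyp2 : ∀ d ∈ D.image (· + (-e)),
            R' ((A + D.image (· + (-e))).image (fun a => a - d)) := by
          intro d hd
          obtain ⟨b, hbD, rfl⟩ := Finset.mem_image.1 hd
          have h5 := wrapT_s4 hT (-e) (hyp b hbD)
          have e5 : (A + D).image (· + (-e)) = A + D.image (· + (-e)) := by
            rw [imgAdd, imgAdd, add_assoc]
          rwa [e5] at h5
        refine ih ((D.image (· + (-e))).erase (-e)) hcard2 h0D2' (A ∪ (A + {-e}))
          (hA.mono subset_union_left) ?_
        intro d hd
        have hsub : A + D.image (· + (-e)) ⊆ (A ∪ (A + {-e})) + (D.image (· + (-e))).erase (-e) := by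
          nth_rewrite 1 [← Finset.insert_erase hneD2]
          rw [Finset.insert_eq, Finset.add_union, Finset.union_add]
          refine Finset.union_subset ?_ ?_
          · exact (subset_add_of_zero_mem h0D2').trans subset_union_right
          · exact subset_union_left
        exact wrapT_s1 hT (hA.add ⟨0, h0D2⟩) hsub (hyp2 d (Finset.mem_of_mem_erase hd))
      exact D2Lem hT hReg hA e hA1 hA2

end part4
include h

set_option maxHeartbeats 1000000 in
lemma part1_s1 {A A' : Finset G} {x : G} (hA' : A'.Nonempty) (hsub : A' ⊆ A)
    (hw : ∃ B : Finset G, B.Nonempty ∧ ∀ b ∈ B, rhd ((A'.image (fun a => a - x)) + B) b) :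
    ∃ B : Finset G, B.Nonempty ∧ ∀ b ∈ B, rhd ((A.image (fun a => a - x)) + B) b := by
  obtain ⟨B, hB, hb⟩ := hw
  refine ⟨B, hB, fun b hbB => ?_⟩
  exact h.s1 ((hA'.image _).add hB)
    (Finset.add_subset_add_right (Finset.image_subset_image hsub)) (hb b hbB)

set_option maxHeartbeats 1000000 in
lemma part1_s2 {A : Finset G} {x y : G} (hA : A.Nonempty)
    (h1 : ∃ B : Finset G, B.Nonempty ∧
      ∀ b ∈ B, rhd (((insert y A).image (fun a => a - x)) + B) b)
    (h2 : ∃ C : Finset G, C.Nonempty ∧ ∀ c ∈ C, rhd ((A.image (fun a => a - y)) + C) c) :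
    ∃ B : Finset G, B.Nonempty ∧ ∀ b ∈ B, rhd ((A.image (fun a => a - x)) + B) b := by
  obtain ⟨B, hB, hb⟩ := h1
  obtain ⟨C, hC, hc⟩ := h2
  have h1' : leS rhd (({y - x} ∪ A.image (fun a => a - x)) + B) B := by
    intro b hbB
    have h3 := hb b hbB
    rwa [Finset.image_insert, Finset.insert_eq] at h3
  have h2' : leS rhd ((A.image (fun a => a - x)) + {-(y - x)} + C) C := by
    intro c hcC
    have h3 := hc c hcC
    have e2 : A.image (fun a => a - y) = (A.image (fun a => a - x)) + {-(y - x)} := by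
      rw [← imgSub, Finset.image_image]
      exact Finset.image_congr fun a _ => by show a - y = a - x - (y - x); abel
    rwa [e2] at h3
  exact ⟨B + C, hB.add hC, R_cut h (hA.image _) hB hC h1' h2'⟩

set_option maxHeartbeats 1000000 in
lemma part1_s3 {a x : G} (hax : a ≤ x) :
    ∃ B : Finset G, B.Nonempty ∧ ∀ b ∈ B, rhd (({a} : Finset G).image (fun a => a - x) + B) b := by
  refine ⟨{0}, Finset.singleton_nonempty 0, fun b hb => ?_⟩
  rw [Finset.mem_singleton] at hb
  subst hb
  rw [Finset.image_singleton, addZero]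
  refine h.s3 ?_
  have h4 : -x + a ≤ -x + x := add_le_add (le_refl (-x)) hax
  rw [neg_add_cancel] at h4
  rw [sub_eq_neg_add]
  exact h4

set_option maxHeartbeats 1000000 in
lemma part4_final (R' : Finset G → Prop)
    (hT : IsEquivariantIdeal (fun (A : Finset G) (x : G) => R' (A.image (fun a => a - x))))
    (hReg : (∀ A B : Finset G, A.Nonempty → B.Nonempty →
        R' ((A + B) ∪ A) → R' ((A + B) ∪ B) → R' (A + B)) ∧ (∀ x : G, R' {x, -x}))
    (hCont : ∀ A : Finset G, A.Nonempty → rhd A 0 → R' A)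
    (A : Finset G) (hA : A.Nonempty)
    (hw : ∃ B : Finset G, B.Nonempty ∧ ∀ b ∈ B, rhd (A + B) b) : R' A := by
  obtain ⟨B, hB, hb⟩ := hw
  obtain ⟨b₀, hb₀⟩ := hB
  have h0D : (0:G) ∈ B.image (· + (-b₀)) := Finset.mem_image.2 ⟨b₀, hb₀, add_neg_cancel b₀⟩
  refine P4ind hT hReg B.card (B.image (· + (-b₀))) Finset.card_image_le h0D A hA ?_
  intro d hd
  obtain ⟨b, hbB, rfl⟩ := Finset.mem_image.1 hd
  have r1 := (h.s4 (-b)).1 (hb b hbB)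
  rw [add_neg_cancel] at r1
  have r2 : R' ((A + B).image (· + (-b))) := hCont _ ((hA.add ⟨b₀, hb₀⟩).image _) r1
  have e : (A + B.image (· + (-b₀))).image (fun a => a - (b + -b₀)) = (A + B).image (· + (-b)) := by
    rw [imgSub, imgAdd, imgAdd]
    have e1 : A + (B + {-b₀}) + {-(b + -b₀)} = (A + B) + ({-b₀} + {-(b + -b₀)}) := by abel
    rw [e1, Finset.singleton_add_singleton, show -b₀ + -(b + -b₀) = -b from by abel]
  rw [e]
  exact r2

end more

set_option maxHeartbeats 1000000

theorem prufer_regularisation {G : Type*} [AddCommGroup G] [Preorder G]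
    [CovariantClass G G (· + ·) (· ≤ ·)] [DecidableEq G]
    (rhd : Finset G → G → Prop) (h : IsEquivariantIdeal rhd) :
    -- R(A) iff there is a nonempty finite B with A + B ≤_S B
    (IsEquivariantIdeal (fun A x =>
      ∃ B : Finset G, B.Nonempty ∧ ∀ b ∈ B, rhd ((A.image (fun a => a - x)) + B) b)) ∧
    IsRegularPred (fun A : Finset G => ∃ B : Finset G, B.Nonempty ∧ ∀ b ∈ B, rhd (A + B) b) ∧
    (∀ A : Finset G, A.Nonempty → rhd A 0 →
      ∃ B : Finset G, B.Nonempty ∧ ∀ b ∈ B, rhd (A + B) b) ∧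
    (∀ R' : Finset G → Prop,
      IsEquivariantIdeal (fun A x => R' (A.image (fun a => a - x))) →
      IsRegularPred R' →
      (∀ A : Finset G, A.Nonempty → rhd A 0 → R' A) →
      ∀ A : Finset G, A.Nonempty →
        (∃ B : Finset G, B.Nonempty ∧ ∀ b ∈ B, rhd (A + B) b) → R' A) := by
  refine ⟨⟨?_, ?_, ?_, ?_⟩, ⟨?_, ?_⟩, ?_, ?_⟩
  · intro A A' x hA' hsub hw
    exact part1_s1 h hA' hsub hw
  · intro A x y hA h1 h2
    exact part1_s2 h hA h1 h2
  · intro a x hax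
    exact part1_s3 h hax
  · intro A x y
    have e : (A.image (· + y)).image (fun a => a - (x + y)) = A.image (fun a => a - x) := by
      rw [Finset.image_image]
      exact Finset.image_congr fun a _ => by show a + y - (x + y) = a - x; abel
    rw [e]
  · rintro A B hA hB ⟨C, hC, hc⟩ ⟨D, hD, hd⟩
    exact ⟨(C + D) ∪ (A + (C + D)), (hC.add hD).mono subset_union_left,
      R_reg1 h hA hB hC hD hc hd⟩
  · intro x
    refine ⟨{0, x}, Finset.insert_nonempty _ _, fun b hb => ?_⟩
    rcases Finset.mem_insert.1 hb with rfl | hb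
    · exact eqi_mem h (Finset.mem_add.2 ⟨-x, by simp, x, by simp, neg_add_cancel x⟩)
    · rw [Finset.mem_singleton] at hb
      subst hb
      exact eqi_mem h (Finset.mem_add.2 ⟨b, by simp, 0, by simp, add_zero b⟩)
  · intro A hA h0
    exact ⟨{0}, Finset.singleton_nonempty 0, fun b hb => by
      rw [Finset.mem_singleton] at hb
      subst hb
      rwa [addZero]⟩
  · intro R' hT hReg hCont A hA hw
    exact part4_final h R' hT hReg hCont A hA hw
end
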